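/- Let X, Y ∈ 𝓢^q (taken with disjoint supports). Then X and Y are coprime if and only if they have no irreducible factor in common, i.e. there is no irreducible Z ∈ 𝓕 which is equivalent both to a factor in a decomposition of X into irreducibles and to a factor in a decomposition of Y into irreducibles. -/

import Mathlib

open Equiv Pointwise

namespace FPS

/-- The support of a permutation of `ℕ`. -/
def psupp (ρ : Equiv.Perm ℕ) : Set ℕ := {ω | ρ ω ≠ ω}

/-- The support of a set of permutations of `ℕ`. -/
def ssupp (X : Set (Equiv.Perm ℕ)) : Set ℕ := ⋃ ρ ∈ X, psupp ρ

/-- `Sym(α)`: the subgroup of permutations of `ℕ` supported on the subset `α`. -/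
def symOn (α : Set ℕ) : Subgroup (Equiv.Perm ℕ) where
  carrier := {g | ∀ ω, ω ∉ α → g ω = ω}
  one_mem' := fun _ _ => rfl
  mul_mem' := by
    intro a b ha hb ω hω
    have hbω := hb ω hω
    have haω := ha ω hω
    show a (b ω) = ω
    rw [hbω, haω]
  inv_mem' := by
    intro a ha ω hω
    have haω := ha ω hω
    show a⁻¹ ω = ω
    nth_rewrite 1 [← haω]
    exact Equiv.symm_apply_apply a ω

/-- Membership in the family `𝓕`: finite nonempty sets of finitary permutations,
different from `{1}`. -/
def memF (X : Set (Equiv.Perm ℕ)) : Prop :=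
  X.Finite ∧ X.Nonempty ∧ X ≠ {1} ∧ ∀ ρ ∈ X, (psupp ρ).Finite

/-- Membership in `𝓢^q`: members of `𝓕` all of whose elements are products of `q`-cycles
(each orbit on the support has size `q`) with full support. -/
def memS (q : ℕ) (X : Set (Equiv.Perm ℕ)) : Prop :=
  memF X ∧ (∀ ρ ∈ X, psupp ρ = ssupp X) ∧
    ∀ ρ ∈ X, ∀ ω ∈ psupp ρ, (Set.range fun n : ℤ => (ρ ^ n) ω).ncard = q

/-- Right conjugation `x ↦ x^g = g⁻¹ x g`. -/
def conjR (g x : Equiv.Perm ℕ) : Equiv.Perm ℕ := g⁻¹ * x * g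

/-- Conjugate of a set of permutations: `X^g`. -/
def conjSet (g : Equiv.Perm ℕ) (X : Set (Equiv.Perm ℕ)) : Set (Equiv.Perm ℕ) := conjR g '' X

/-- The setwise stabilizer (under conjugation) of a set of permutations,
as a subgroup of the full group `Sym(ℕ)`. -/
def setStab (X : Set (Equiv.Perm ℕ)) : Subgroup (Equiv.Perm ℕ) where
  carrier := {g | ∀ x, x ∈ X ↔ g⁻¹ * x * g ∈ X}
  one_mem' := by
    intro x
    simp
  mul_mem' := by
    intro a b ha hb x
    have h1 := ha x
    have h2 := hb (a⁻¹ * x * a)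
    have e : b⁻¹ * (a⁻¹ * x * a) * b = (a * b)⁻¹ * x * (a * b) := by group
    rw [e] at h2
    exact h1.trans h2
  inv_mem' := by
    intro a ha x
    have h := ha (a * x * a⁻¹)
    have e : a⁻¹ * (a * x * a⁻¹) * a = x := by group
    rw [e] at h
    have e2 : a * x * a⁻¹ = a⁻¹⁻¹ * x * a⁻¹ := by group
    rw [e2] at h
    exact h.symm

/-- `N_X`: the stabilizer of `X` in `G_X = Sym(supp X)`. -/
def NX (X : Set (Equiv.Perm ℕ)) : Subgroup (Equiv.Perm ℕ) := symOn (ssupp X) ⊓ setStab X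

/-- `S_X = C_{G_X}(X)`: the pointwise centralizer of `X` in `G_X = Sym(supp X)`. -/
def SX (X : Set (Equiv.Perm ℕ)) : Subgroup (Equiv.Perm ℕ) :=
  symOn (ssupp X) ⊓ Subgroup.centralizer X

/-- `Q` is a Sylow `p`-subgroup of the subgroup `H` (that is, a maximal `p`-subgroup of `H`). -/
def IsSylowOf {G : Type*} [Group G] (p : ℕ) (Q H : Subgroup G) : Prop :=
  Q ≤ H ∧ IsPGroup p Q ∧ ∀ R : Subgroup G, R ≤ H → IsPGroup p R → Q ≤ R → R = Q

/-- `Ξ_X = ⋃_{g ∈ G_X} X^g`. -/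
def Xi (X : Set (Equiv.Perm ℕ)) : Set (Equiv.Perm ℕ) :=
  ⋃ g ∈ (symOn (ssupp X) : Set (Equiv.Perm ℕ)), conjSet g X

/-- `X` is closed: `C_{G_X}(Q_X) ∩ Ξ_X = X` for (any) Sylow `p`-subgroup `Q_X` of `S_X`. -/
def IsClosedSet (p : ℕ) (X : Set (Equiv.Perm ℕ)) : Prop :=
  ∀ Q : Subgroup (Equiv.Perm ℕ), IsSylowOf p Q (SX X) →
    (Subgroup.centralizer (Q : Set (Equiv.Perm ℕ)) : Set (Equiv.Perm ℕ)) ∩ Xi X = X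

/-- `X` is exact: `supp Q_X = supp X` for (any) Sylow `p`-subgroup `Q_X` of `S_X`. -/
def IsExactSet (p : ℕ) (X : Set (Equiv.Perm ℕ)) : Prop :=
  ∀ Q : Subgroup (Equiv.Perm ℕ), IsSylowOf p Q (SX X) →
    ssupp (Q : Set (Equiv.Perm ℕ)) = ssupp X

/-- `X` is projective: `Q_X = 1`. -/
def IsProjectiveSet (p : ℕ) (X : Set (Equiv.Perm ℕ)) : Prop :=
  ∀ Q : Subgroup (Equiv.Perm ℕ), IsSylowOf p Q (SX X) → Q = ⊥

/-- `X ∈ 𝓕` is irreducible if it is not a product of two members of `𝓕`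
with disjoint supports. -/
def IsIrred (X : Set (Equiv.Perm ℕ)) : Prop :=
  memF X ∧ ∀ Y Z : Set (Equiv.Perm ℕ), memF Y → memF Z →
    Disjoint (ssupp Y) (ssupp Z) → X ≠ Y * Z

/-- Two sets of permutations are equivalent if they are conjugate in `Sym(ℕ)`. -/
def EquivSet (X Y : Set (Equiv.Perm ℕ)) : Prop := ∃ g : Equiv.Perm ℕ, conjSet g X = Y

/-- `D` is a realization of `Δ^s X`: the diagonal of a product of `s` disjointly
supported conjugates of `X`. -/
def IsDelta (s : ℕ) (X D : Set (Equiv.Perm ℕ)) : Prop :=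
  ∃ g : Fin s → Equiv.Perm ℕ,
    (∀ i j, i ≠ j → Disjoint (ssupp (conjSet (g i) X)) (ssupp (conjSet (g j) X))) ∧
    D = (fun x => (List.ofFn fun i => conjR (g i) x).prod) '' X

/-- `D` is a realization of the `a`-fold `*`-power `X^a`: a product of `a` disjointly
supported conjugates of `X`. -/
def IsStarPow (a : ℕ) (X D : Set (Equiv.Perm ℕ)) : Prop :=
  ∃ g : Fin a → Equiv.Perm ℕ,
    (∀ i j, i ≠ j → Disjoint (ssupp (conjSet (g i) X)) (ssupp (conjSet (g j) X))) ∧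
    D = (List.ofFn fun i => conjSet (g i) X).prod

/-- `X` is a transitive set: `⟨X⟩` is transitive on `supp X`. -/
def TransitiveSet (X : Set (Equiv.Perm ℕ)) : Prop :=
  ∀ a ∈ ssupp X, ∀ b ∈ ssupp X, ∃ g ∈ Subgroup.closure X, g a = b

lemma mem_setStab {X : Set (Equiv.Perm ℕ)} {g : Equiv.Perm ℕ} :
    g ∈ setStab X ↔ ∀ x, x ∈ X ↔ g⁻¹ * x * g ∈ X := Iff.rfl

lemma conjR_mem {X : Set (Equiv.Perm ℕ)} {g : Equiv.Perm ℕ} (hg : g ∈ setStab X)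
    {x : Equiv.Perm ℕ} (hx : x ∈ X) : g⁻¹ * x * g ∈ X :=
  (mem_setStab.mp hg x).mp hx

lemma conjL_mem {X : Set (Equiv.Perm ℕ)} {g : Equiv.Perm ℕ} (hg : g ∈ setStab X)
    {x : Equiv.Perm ℕ} (hx : x ∈ X) : g * x * g⁻¹ ∈ X := by
  have h := mem_setStab.mp ((setStab X).inv_mem hg) x
  rw [inv_inv] at h
  exact h.mp hx

/-- The permutation of `X` induced by conjugation by an element of `N_X`. -/
def conjPerm (X : Set (Equiv.Perm ℕ)) (g : NX X) : Equiv.Perm X where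
  toFun x := ⟨(g : Equiv.Perm ℕ) * x * (g : Equiv.Perm ℕ)⁻¹,
    conjL_mem (Subgroup.mem_inf.mp g.2).2 x.2⟩
  invFun x := ⟨(g : Equiv.Perm ℕ)⁻¹ * x * (g : Equiv.Perm ℕ),
    conjR_mem (Subgroup.mem_inf.mp g.2).2 x.2⟩
  left_inv x := by
    apply Subtype.ext
    show (g : Equiv.Perm ℕ)⁻¹ * ((g : Equiv.Perm ℕ) * x * (g : Equiv.Perm ℕ)⁻¹) *
      (g : Equiv.Perm ℕ) = x
    group
  right_inv x := by
    apply Subtype.ext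
    show (g : Equiv.Perm ℕ) * ((g : Equiv.Perm ℕ)⁻¹ * x * (g : Equiv.Perm ℕ)) *
      (g : Equiv.Perm ℕ)⁻¹ = x
    group

/-- The action of `N_X` on `X` by conjugation, as a homomorphism `N_X →* Sym(X)`. -/
def MXhom (X : Set (Equiv.Perm ℕ)) : NX X →* Equiv.Perm X where
  toFun := conjPerm X
  map_one' := by
    apply Equiv.ext
    intro x
    apply Subtype.ext
    show ((1 : NX X) : Equiv.Perm ℕ) * x * ((1 : NX X) : Equiv.Perm ℕ)⁻¹ = x
    simp
  map_mul' a b := by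
    apply Equiv.ext
    intro x
    apply Subtype.ext
    show ((a * b : NX X) : Equiv.Perm ℕ) * x * ((a * b : NX X) : Equiv.Perm ℕ)⁻¹
      = (a : Equiv.Perm ℕ) * ((b : Equiv.Perm ℕ) * x * (b : Equiv.Perm ℕ)⁻¹) *
        (a : Equiv.Perm ℕ)⁻¹
    push_cast
    group

/-- `M_X = N_X/S_X`, realized as the image of `N_X` in `Sym(X)` (the action of `N_X`
on `X` is by conjugation, with kernel `S_X`). -/
def MX (X : Set (Equiv.Perm ℕ)) : Subgroup (Equiv.Perm X) := (MXhom X).range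

/-- The permutation module `k[Ω]` of the `G`-set `Ω` has a nonzero projective direct summand. -/
def HasProjSummand (k : Type) [Field k] (G : Type*) [Group G] (Ω : Type*) [MulAction G Ω] :
    Prop :=
  ∃ P W : Submodule (MonoidAlgebra k G) (Representation.ofMulAction k G Ω).asModule,
    IsCompl P W ∧ P ≠ ⊥ ∧ Module.Projective (MonoidAlgebra k G) P

/-- `X` is a fixed point set: `X ∈ 𝓢^q`, `X` is closed, and the permutation
`k M_X`-module `k[X]` has a nonzero projective direct summand. -/
def IsFPS (p q : ℕ) (k : Type) [Field k] (X : Set (Equiv.Perm ℕ)) : Prop :=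
  memS q X ∧ IsClosedSet p X ∧ HasProjSummand k (MX X) X

/-- `X` and `Y` (with disjoint supports) are coprime: `N_{X*Y} = N_X × N_Y`. -/
def CoprimeSets (X Y : Set (Equiv.Perm ℕ)) : Prop := NX (X * Y) = NX X ⊔ NX Y

/-- `X` is projective-free: no factor in a decomposition of `X` into irreducibles
is projective. -/
def ProjFree (p : ℕ) (X : Set (Equiv.Perm ℕ)) : Prop :=
  ∀ L : List (Set (Equiv.Perm ℕ)), (∀ Y ∈ L, IsIrred Y) →
    L.Pairwise (fun A B => Disjoint (ssupp A) (ssupp B)) →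
    X = L.prod → ∀ Y ∈ L, ¬ IsProjectiveSet p Y

/-! ### Basic support lemmas -/

theorem _root_.Equiv.Perm.apply_inv_self {α : Type*} (f : Equiv.Perm α) (x : α) :
    f (f⁻¹ x) = x := f.apply_symm_apply x

theorem _root_.Equiv.Perm.inv_apply_self {α : Type*} (f : Equiv.Perm α) (x : α) :
    f⁻¹ (f x) = x := f.symm_apply_apply x

lemma psupp_subset_ssupp {X : Set (Equiv.Perm ℕ)} {x : Equiv.Perm ℕ} (hx : x ∈ X) :
    psupp x ⊆ ssupp X := fun ω hω => Set.mem_biUnion hx hω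

lemma apply_eq_of_not_mem_psupp {x : Equiv.Perm ℕ} {ω : ℕ} (h : ω ∉ psupp x) : x ω = ω := by
  by_contra hc; exact h hc

lemma apply_mem_psupp {x : Equiv.Perm ℕ} {ω : ℕ} (h : ω ∈ psupp x) : x ω ∈ psupp x := by
  intro hc
  exact h (x.injective hc)

lemma psupp_one : psupp (1 : Equiv.Perm ℕ) = ∅ := by
  ext ω; simp [psupp]

lemma eq_one_of_psupp_empty {x : Equiv.Perm ℕ} (h : psupp x = ∅) : x = 1 := by
  ext ω
  have : ω ∉ psupp x := by rw [h]; exact Set.notMem_empty ω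
  simpa using apply_eq_of_not_mem_psupp this

lemma ssupp_singleton_one : ssupp ({1} : Set (Equiv.Perm ℕ)) = ∅ := by
  simp [ssupp, psupp_one]

lemma memF_ssupp_nonempty {X : Set (Equiv.Perm ℕ)} (h : memF X) : (ssupp X).Nonempty := by
  rcases h with ⟨hfin, hne, hone, hps⟩
  rw [Set.nonempty_iff_ne_empty]
  intro hc
  apply hone
  apply Set.eq_singleton_iff_nonempty_unique_mem.mpr
  refine ⟨hne, fun x hx => ?_⟩
  apply eq_one_of_psupp_empty
  apply Set.eq_empty_iff_forall_notMem.mpr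
  intro ω hω
  have := psupp_subset_ssupp hx hω
  rw [hc] at this
  exact this

lemma memF_ssupp_finite {X : Set (Equiv.Perm ℕ)} (h : memF X) : (ssupp X).Finite :=
  Set.Finite.biUnion h.1 h.2.2.2

/-! ### Stability -/

/-- `x` stabilizes the set `S` setwise. -/
def StSet (x : Equiv.Perm ℕ) (S : Set ℕ) : Prop := ∀ ω, ω ∈ S ↔ x ω ∈ S

lemma StSet.apply_mem {x : Equiv.Perm ℕ} {S : Set ℕ} (h : StSet x S) {ω : ℕ} (hω : ω ∈ S) :
    x ω ∈ S := (h ω).mp hω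

lemma stset_of_psupp_subset {x : Equiv.Perm ℕ} {S : Set ℕ} (h : psupp x ⊆ S) : StSet x S := by
  intro ω
  constructor
  · intro hω
    by_contra hc
    have hns : x ω ∉ psupp x := fun hm => hc (h hm)
    have e : x ω = ω := x.injective (apply_eq_of_not_mem_psupp hns)
    exact hc (by rw [e]; exact hω)
  · intro hx
    by_contra hc
    have hns : ω ∉ psupp x := fun hm => hc (h hm)
    rw [apply_eq_of_not_mem_psupp hns] at hx
    exact hc hx

lemma stset_of_disjoint {x : Equiv.Perm ℕ} {S : Set ℕ} (h : Disjoint (psupp x) S) :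
    StSet x S := by
  intro ω
  constructor
  · intro hω
    have : ω ∉ psupp x := fun hm => (Set.disjoint_left.mp h) hm hω
    rwa [apply_eq_of_not_mem_psupp this]
  · intro hx
    by_cases hm : ω ∈ psupp x
    · exact absurd hx ((Set.disjoint_left.mp h) (apply_mem_psupp hm))
    · rwa [apply_eq_of_not_mem_psupp hm] at hx

lemma StSet.compl {x : Equiv.Perm ℕ} {S : Set ℕ} (h : StSet x S) : StSet x Sᶜ := by
  intro ω
  simp only [Set.mem_compl_iff]
  exact not_congr (h ω)

lemma StSet.inv {x : Equiv.Perm ℕ} {S : Set ℕ} (h : StSet x S) : StSet x⁻¹ S := by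
  intro ω
  have := h (x⁻¹ ω)
  rw [Equiv.Perm.apply_inv_self] at this
  exact this.symm

lemma StSet.mul {x y : Equiv.Perm ℕ} {S : Set ℕ} (hx : StSet x S) (hy : StSet y S) :
    StSet (x * y) S := by
  intro ω
  rw [Equiv.Perm.mul_apply]
  exact (hy ω).trans (hx (y ω))

/-! ### Restriction of a permutation to a stable set -/

open scoped Classical in
/-- The restriction of `x` to `S` (= `x` on `S`, identity elsewhere), defined to be `1`
if `S` is not `x`-stable. -/
noncomputable def rst (x : Equiv.Perm ℕ) (S : Set ℕ) : Equiv.Perm ℕ :=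
  if h : StSet x S then
    { toFun := fun ω => if ω ∈ S then x ω else ω
      invFun := fun ω => if ω ∈ S then x⁻¹ ω else ω
      left_inv := by
        intro ω
        by_cases hω : ω ∈ S
        · simp [hω, (h ω).mp hω]
        · simp [hω]
      right_inv := by
        intro ω
        by_cases hω : ω ∈ S
        · have h' : x.symm ω ∈ S := (h.inv ω).mp hω
          simp [hω, h']
        · simp [hω] }
  else 1

lemma rst_apply_mem {x : Equiv.Perm ℕ} {S : Set ℕ} (h : StSet x S) {ω : ℕ} (hω : ω ∈ S) :
    rst x S ω = x ω := by
  rw [rst, dif_pos h]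
  exact if_pos hω

lemma rst_apply_not_mem {x : Equiv.Perm ℕ} {S : Set ℕ} {ω : ℕ} (hω : ω ∉ S) :
    rst x S ω = ω := by
  rw [rst]
  by_cases h : StSet x S
  · rw [dif_pos h]
    exact if_neg hω
  · rw [dif_neg h]
    rfl

lemma psupp_rst_subset {x : Equiv.Perm ℕ} {S : Set ℕ} : psupp (rst x S) ⊆ S := by
  intro ω hω
  by_contra hc
  exact hω (rst_apply_not_mem hc)

lemma psupp_rst {x : Equiv.Perm ℕ} {S : Set ℕ} (h : StSet x S) :
    psupp (rst x S) = S ∩ psupp x := by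
  ext ω
  constructor
  · intro hω
    have hωS : ω ∈ S := psupp_rst_subset hω
    refine ⟨hωS, ?_⟩
    rwa [psupp, Set.mem_setOf_eq, rst_apply_mem h hωS] at hω
  · rintro ⟨h1, h2⟩
    rw [psupp, Set.mem_setOf_eq, rst_apply_mem h h1]
    exact h2

lemma rst_eq_self {x : Equiv.Perm ℕ} {S : Set ℕ} (h : psupp x ⊆ S) : rst x S = x := by
  have hst := stset_of_psupp_subset h
  ext ω
  by_cases hω : ω ∈ S
  · rw [rst_apply_mem hst hω]
  · rw [rst_apply_not_mem hω, apply_eq_of_not_mem_psupp (fun hm => hω (h hm))]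

lemma rst_empty {x : Equiv.Perm ℕ} : rst x (∅ : Set ℕ) = 1 := by
  ext ω
  rw [rst_apply_not_mem (Set.notMem_empty ω)]
  rfl

lemma rst_inv {x : Equiv.Perm ℕ} {S : Set ℕ} (h : StSet x S) : (rst x S)⁻¹ = rst x⁻¹ S := by
  apply inv_eq_of_mul_eq_one_right
  ext ω
  rw [Equiv.Perm.mul_apply]
  by_cases hω : ω ∈ S
  · rw [rst_apply_mem h.inv hω, rst_apply_mem h ((h.inv ω).mp hω), Equiv.Perm.apply_inv_self]
    rfl
  · rw [rst_apply_not_mem hω, rst_apply_not_mem hω]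
    rfl

/-! ### Mixing two permutations along a set -/

/-- The permutation agreeing with `x` on `S` and with `y` off `S`. -/
noncomputable def mixp (x y : Equiv.Perm ℕ) (S : Set ℕ) : Equiv.Perm ℕ :=
  rst x S * rst y Sᶜ

lemma mixp_apply_mem {x y : Equiv.Perm ℕ} {S : Set ℕ} (hx : StSet x S) {ω : ℕ}
    (hω : ω ∈ S) : mixp x y S ω = x ω := by
  have h1 : (rst y Sᶜ) ω = ω := rst_apply_not_mem (by simp [hω])
  calc mixp x y S ω = rst x S ((rst y Sᶜ) ω) := rfl
  _ = rst x S ω := by rw [h1]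
  _ = x ω := rst_apply_mem hx hω

lemma mixp_apply_not_mem {x y : Equiv.Perm ℕ} {S : Set ℕ} (hy : StSet y S) {ω : ℕ}
    (hω : ω ∉ S) : mixp x y S ω = y ω := by
  have h1 : (rst y Sᶜ) ω = y ω := rst_apply_mem hy.compl (by simpa using hω)
  have h2 : y ω ∉ S := by
    have := (hy.compl ω).mp (by simpa using hω)
    simpa using this
  calc mixp x y S ω = rst x S ((rst y Sᶜ) ω) := rfl
  _ = rst x S (y ω) := by rw [h1]
  _ = y ω := rst_apply_not_mem h2

/-! ### Commuting permutations with disjoint supports -/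

lemma commute_of_disjoint_psupp {x y : Equiv.Perm ℕ} (h : Disjoint (psupp x) (psupp y)) :
    x * y = y * x := by
  ext ω
  rw [Equiv.Perm.mul_apply, Equiv.Perm.mul_apply]
  by_cases hx : ω ∈ psupp x
  · have hy : ω ∉ psupp y := Set.disjoint_left.mp h hx
    rw [apply_eq_of_not_mem_psupp hy]
    have : x ω ∉ psupp y := Set.disjoint_left.mp h (apply_mem_psupp hx)
    rw [apply_eq_of_not_mem_psupp this]
  · by_cases hy : ω ∈ psupp y
    · rw [apply_eq_of_not_mem_psupp hx]
      have : y ω ∉ psupp x := fun hc => (Set.disjoint_left.mp h hc) (apply_mem_psupp hy)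
      rw [apply_eq_of_not_mem_psupp this]
    · simp [apply_eq_of_not_mem_psupp hx, apply_eq_of_not_mem_psupp hy]

lemma conjR_eq_self_of_disjoint {g y : Equiv.Perm ℕ} (h : Disjoint (psupp g) (psupp y)) :
    conjR g y = y := by
  rw [conjR, mul_assoc, commute_of_disjoint_psupp h.symm, inv_mul_cancel_left]

lemma psupp_mul_subset {x y : Equiv.Perm ℕ} : psupp (x * y) ⊆ psupp x ∪ psupp y := by
  intro ω hω
  by_contra hc
  rw [Set.mem_union] at hc
  push_neg at hc
  apply hω
  show x (y ω) = ω
  rw [apply_eq_of_not_mem_psupp hc.2, apply_eq_of_not_mem_psupp hc.1]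

lemma psupp_mul_eq {x y : Equiv.Perm ℕ} (h : Disjoint (psupp x) (psupp y)) :
    psupp (x * y) = psupp x ∪ psupp y := by
  apply Set.Subset.antisymm psupp_mul_subset
  intro ω hω
  rcases hω with hx | hy
  · have hy : ω ∉ psupp y := Set.disjoint_left.mp h hx
    show x (y ω) ≠ ω
    rw [apply_eq_of_not_mem_psupp hy]
    exact hx
  · have hx : y ω ∉ psupp x := fun hc => Set.disjoint_left.mp h hc (apply_mem_psupp hy)
    show x (y ω) ≠ ω
    rw [apply_eq_of_not_mem_psupp hx]
    exact fun hc => hy hc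

/-! ### Blocks -/

/-- A block of a set of permutations: a subset of the support which is stable under
every element, and such that mixing any two elements along it stays in the set. -/
def IsBlk (X : Set (Equiv.Perm ℕ)) (S : Set ℕ) : Prop :=
  S ⊆ ssupp X ∧ (∀ x ∈ X, StSet x S) ∧ ∀ x ∈ X, ∀ y ∈ X, mixp x y S ∈ X

lemma IsBlk.subset {X : Set (Equiv.Perm ℕ)} {S : Set ℕ} (h : IsBlk X S) : S ⊆ ssupp X := h.1

lemma IsBlk.st {X : Set (Equiv.Perm ℕ)} {S : Set ℕ} (h : IsBlk X S) {x : Equiv.Perm ℕ}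
    (hx : x ∈ X) : StSet x S := h.2.1 x hx

lemma IsBlk.mix {X : Set (Equiv.Perm ℕ)} {S : Set ℕ} (h : IsBlk X S) {x y : Equiv.Perm ℕ}
    (hx : x ∈ X) (hy : y ∈ X) : mixp x y S ∈ X := h.2.2 x hx y hy

lemma stset_ssupp {X : Set (Equiv.Perm ℕ)} {x : Equiv.Perm ℕ} (hx : x ∈ X) :
    StSet x (ssupp X) := stset_of_psupp_subset (psupp_subset_ssupp hx)

lemma isBlk_ssupp {X : Set (Equiv.Perm ℕ)} : IsBlk X (ssupp X) := by
  refine ⟨subset_rfl, fun x hx => stset_ssupp hx, fun x hx y hy => ?_⟩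
  have : mixp x y (ssupp X) = x := by
    ext ω
    by_cases hω : ω ∈ ssupp X
    · rw [mixp_apply_mem (stset_ssupp hx) hω]
    · rw [mixp_apply_not_mem (stset_ssupp hy) hω,
        apply_eq_of_not_mem_psupp (fun hm => hω (psupp_subset_ssupp hy hm)),
        apply_eq_of_not_mem_psupp (fun hm => hω (psupp_subset_ssupp hx hm))]
  rw [this]; exact hx

lemma IsBlk.inter {X : Set (Equiv.Perm ℕ)} {S T : Set ℕ} (hS : IsBlk X S) (hT : IsBlk X T) :
    IsBlk X (S ∩ T) := by
  have hst : ∀ x ∈ X, StSet x (S ∩ T) := by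
    intro x hx ω
    constructor
    · rintro ⟨h1, h2⟩; exact ⟨(hS.st hx ω).mp h1, (hT.st hx ω).mp h2⟩
    · rintro ⟨h1, h2⟩; exact ⟨(hS.st hx ω).mpr h1, (hT.st hx ω).mpr h2⟩
  refine ⟨fun ω hω => hS.subset hω.1, hst, fun x hx y hy => ?_⟩
  have key : mixp x y (S ∩ T) = mixp (mixp x y S) y T := by
    have hmS : mixp x y S ∈ X := hS.mix hx hy
    ext ω
    by_cases hωT : ω ∈ T
    · rw [mixp_apply_mem (hT.st hmS) hωT]
      by_cases hωS : ω ∈ S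
      · rw [mixp_apply_mem (hS.st hx) hωS, mixp_apply_mem (hst x hx) ⟨hωS, hωT⟩]
      · rw [mixp_apply_not_mem (hS.st hy) hωS,
          mixp_apply_not_mem (hst y hy) (fun hc => hωS hc.1)]
    · rw [mixp_apply_not_mem (hT.st hy) hωT,
        mixp_apply_not_mem (hst y hy) (fun hc => hωT hc.2)]
  rw [key]
  exact hT.mix (hS.mix hx hy) hy

lemma psupp_rst_subset' {x : Equiv.Perm ℕ} {S : Set ℕ} : psupp (rst x S) ⊆ psupp x := by
  by_cases h : StSet x S
  · rw [psupp_rst h]; exact Set.inter_subset_right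
  · rw [rst, dif_neg h, psupp_one]; exact Set.empty_subset _

lemma IsBlk.compl {X : Set (Equiv.Perm ℕ)} {S : Set ℕ} (hS : IsBlk X S) :
    IsBlk X (ssupp X \ S) := by
  have hst : ∀ x ∈ X, StSet x (ssupp X \ S) := by
    intro x hx ω
    constructor
    · rintro ⟨h1, h2⟩
      exact ⟨(stset_ssupp hx ω).mp h1, fun hc => h2 ((hS.st hx ω).mpr hc)⟩
    · rintro ⟨h1, h2⟩
      exact ⟨(stset_ssupp hx ω).mpr h1, fun hc => h2 ((hS.st hx ω).mp hc)⟩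
  refine ⟨Set.diff_subset, hst, fun x hx y hy => ?_⟩
  have key : mixp x y (ssupp X \ S) = mixp y x S := by
    ext ω
    by_cases hωS : ω ∈ S
    · rw [mixp_apply_not_mem (hst y hy) (fun hc => hc.2 hωS), mixp_apply_mem (hS.st hy) hωS]
    · by_cases hωs : ω ∈ ssupp X
      · rw [mixp_apply_mem (hst x hx) ⟨hωs, hωS⟩, mixp_apply_not_mem (hS.st hx) hωS]
      · rw [mixp_apply_not_mem (hst y hy) (fun hc => hωs hc.1),
          mixp_apply_not_mem (hS.st hx) hωS,
          apply_eq_of_not_mem_psupp (fun hm => hωs (psupp_subset_ssupp hx hm)),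
          apply_eq_of_not_mem_psupp (fun hm => hωs (psupp_subset_ssupp hy hm))]
  rw [key]
  exact hS.mix hy hx

lemma IsBlk.union {X : Set (Equiv.Perm ℕ)} {S T : Set ℕ} (hS : IsBlk X S) (hT : IsBlk X T) :
    IsBlk X (S ∪ T) := by
  have hst : ∀ x ∈ X, StSet x (S ∪ T) := by
    intro x hx ω
    constructor
    · rintro (h | h)
      · exact Or.inl ((hS.st hx ω).mp h)
      · exact Or.inr ((hT.st hx ω).mp h)
    · rintro (h | h)
      · exact Or.inl ((hS.st hx ω).mpr h)
      · exact Or.inr ((hT.st hx ω).mpr h)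
  refine ⟨Set.union_subset hS.subset hT.subset, hst, fun x hx y hy => ?_⟩
  have hmT : mixp x y T ∈ X := hT.mix hx hy
  have key : mixp x y (S ∪ T) = mixp x (mixp x y T) S := by
    ext ω
    by_cases hωS : ω ∈ S
    · rw [mixp_apply_mem (hS.st hx) hωS, mixp_apply_mem (hst x hx) (Or.inl hωS)]
    · rw [mixp_apply_not_mem (hS.st hmT) hωS]
      by_cases hωT : ω ∈ T
      · rw [mixp_apply_mem (hT.st hx) hωT, mixp_apply_mem (hst x hx) (Or.inr hωT)]
      · rw [mixp_apply_not_mem (hT.st hy) hωT,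
          mixp_apply_not_mem (hst y hy) (fun hc => hc.elim hωS hωT)]
  rw [key]
  exact hS.mix hx hmT

/-! ### Restriction sets -/

/-- The set of restrictions of elements of `X` to `S`. -/
noncomputable def rstSet (X : Set (Equiv.Perm ℕ)) (S : Set ℕ) : Set (Equiv.Perm ℕ) :=
  {y | ∃ x ∈ X, rst x S = y}

lemma rst_mem_rstSet {X : Set (Equiv.Perm ℕ)} {S : Set ℕ} {x : Equiv.Perm ℕ} (hx : x ∈ X) :
    rst x S ∈ rstSet X S := ⟨x, hx, rfl⟩

lemma rstSet_finite {X : Set (Equiv.Perm ℕ)} {S : Set ℕ} (h : X.Finite) :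
    (rstSet X S).Finite := by
  have : rstSet X S = (fun x => rst x S) '' X := by
    ext y; exact ⟨fun ⟨x, hx, he⟩ => ⟨x, hx, he⟩, fun ⟨x, hx, he⟩ => ⟨x, hx, he⟩⟩
  rw [this]
  exact h.image _

lemma rstSet_nonempty {X : Set (Equiv.Perm ℕ)} {S : Set ℕ} (h : X.Nonempty) :
    (rstSet X S).Nonempty := by
  obtain ⟨x, hx⟩ := h
  exact ⟨rst x S, rst_mem_rstSet hx⟩

lemma ssupp_rstSet {X : Set (Equiv.Perm ℕ)} {S : Set ℕ} (h : ∀ x ∈ X, StSet x S) :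
    ssupp (rstSet X S) = S ∩ ssupp X := by
  ext ω
  constructor
  · intro hω
    rcases Set.mem_iUnion₂.mp hω with ⟨u, ⟨x, hx, rfl⟩, hωu⟩
    rw [psupp_rst (h x hx)] at hωu
    exact ⟨hωu.1, psupp_subset_ssupp hx hωu.2⟩
  · rintro ⟨hωS, hωs⟩
    rcases Set.mem_iUnion₂.mp hωs with ⟨x, hx, hω⟩
    apply Set.mem_biUnion (rst_mem_rstSet hx)
    rw [psupp_rst (h x hx)]
    exact ⟨hωS, hω⟩

lemma memF_rstSet {X : Set (Equiv.Perm ℕ)} {S : Set ℕ} (hX : memF X) (hb : IsBlk X S)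
    (hne : S.Nonempty) : memF (rstSet X S) := by
  refine ⟨rstSet_finite hX.1, rstSet_nonempty hX.2.1, ?_, ?_⟩
  · intro hc
    have h1 := ssupp_rstSet (fun x hx => hb.st hx)
    rw [hc, ssupp_singleton_one] at h1
    rw [Set.inter_eq_self_of_subset_left hb.subset] at h1
    exact Set.not_nonempty_empty (h1 ▸ hne)
  · rintro ρ ⟨x, hx, rfl⟩
    exact Set.Finite.subset (hX.2.2.2 x hx) psupp_rst_subset'

/-- A block decomposes `X` as a product. -/
lemma blk_decomp {X : Set (Equiv.Perm ℕ)} {S : Set ℕ} (hb : IsBlk X S) :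
    X = rstSet X S * rstSet X (ssupp X \ S) := by
  have hbc := hb.compl
  apply Set.Subset.antisymm
  · intro x hx
    have key : x = rst x S * rst x (ssupp X \ S) := by
      ext ω
      rw [Equiv.Perm.mul_apply]
      by_cases hωS : ω ∈ S
      · have h1 : rst x (ssupp X \ S) ω = ω :=
          rst_apply_not_mem (fun hc => hc.2 hωS)
        rw [h1, rst_apply_mem (hb.st hx) hωS]
      · by_cases hωs : ω ∈ ssupp X
        · have h1 : rst x (ssupp X \ S) ω = x ω := rst_apply_mem (hbc.st hx) ⟨hωs, hωS⟩
          have h2 : x ω ∉ S := fun hc => hωS ((hb.st hx ω).mpr hc)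
          rw [h1, rst_apply_not_mem h2]
        · have h1 : rst x (ssupp X \ S) ω = ω :=
            rst_apply_not_mem (fun hc => hωs hc.1)
          rw [h1, rst_apply_not_mem hωS,
            apply_eq_of_not_mem_psupp (fun hm => hωs (psupp_subset_ssupp hx hm))]
    rw [key]
    exact Set.mul_mem_mul (rst_mem_rstSet hx) (rst_mem_rstSet hx)
  · rintro w hw
    rw [Set.mem_mul] at hw
    obtain ⟨u, ⟨x, hx, rfl⟩, v, ⟨y, hy, rfl⟩, rfl⟩ := hw
    have key : rst x S * rst y (ssupp X \ S) = mixp x y S := by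
      ext ω
      rw [Equiv.Perm.mul_apply]
      by_cases hωS : ω ∈ S
      · have h1 : rst y (ssupp X \ S) ω = ω := rst_apply_not_mem (fun hc => hc.2 hωS)
        rw [h1, rst_apply_mem (hb.st hx) hωS, mixp_apply_mem (hb.st hx) hωS]
      · rw [mixp_apply_not_mem (hb.st hy) hωS]
        by_cases hωs : ω ∈ ssupp X
        · have h1 : rst y (ssupp X \ S) ω = y ω := rst_apply_mem (hbc.st hy) ⟨hωs, hωS⟩
          have h2 : y ω ∉ S := fun hc => hωS ((hb.st hy ω).mpr hc)
          rw [h1, rst_apply_not_mem h2]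
        · have h1 : rst y (ssupp X \ S) ω = ω := rst_apply_not_mem (fun hc => hωs hc.1)
          rw [h1, rst_apply_not_mem hωS,
            apply_eq_of_not_mem_psupp (fun hm => hωs (psupp_subset_ssupp hy hm))]
    exact key ▸ hb.mix hx hy

/-- Disjoint blocks give a product of restrictions. -/
lemma rstSet_mul_rstSet {X : Set (Equiv.Perm ℕ)} {S T : Set ℕ} (hS : IsBlk X S)
    (hT : IsBlk X T) (hd : Disjoint S T) :
    rstSet X S * rstSet X T = rstSet X (S ∪ T) := by
  have hst : ∀ x ∈ X, StSet x (S ∪ T) := fun x hx => (hS.union hT).st hx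
  apply Set.Subset.antisymm
  · rintro w hw
    rw [Set.mem_mul] at hw
    obtain ⟨u, ⟨x, hx, rfl⟩, v, ⟨y, hy, rfl⟩, rfl⟩ := hw
    have hm : mixp x y S ∈ X := hS.mix hx hy
    have key : rst x S * rst y T = rst (mixp x y S) (S ∪ T) := by
      ext ω
      rw [Equiv.Perm.mul_apply]
      by_cases hωS : ω ∈ S
      · have h1 : rst y T ω = ω := rst_apply_not_mem (Set.disjoint_left.mp hd hωS)
        rw [h1, rst_apply_mem (hS.st hx) hωS, rst_apply_mem (hst _ hm) (Or.inl hωS),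
          mixp_apply_mem (hS.st hx) hωS]
      · by_cases hωT : ω ∈ T
        · have hyT : y ω ∈ T := (hT.st hy).apply_mem hωT
          have h1 : rst y T ω = y ω := rst_apply_mem (hT.st hy) hωT
          rw [h1, rst_apply_not_mem (Set.disjoint_right.mp hd hyT),
            rst_apply_mem (hst _ hm) (Or.inr hωT), mixp_apply_not_mem (hS.st hy) hωS]
        · have h1 : rst y T ω = ω := rst_apply_not_mem hωT
          rw [h1, rst_apply_not_mem hωS,
            rst_apply_not_mem (fun hc : ω ∈ S ∪ T => hc.elim hωS hωT)]
    rw [key]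
    exact rst_mem_rstSet hm
  · rintro w ⟨x, hx, rfl⟩
    have key : rst x (S ∪ T) = rst x S * rst x T := by
      ext ω
      rw [Equiv.Perm.mul_apply]
      by_cases hωT : ω ∈ T
      · have hxT : x ω ∈ T := (hT.st hx).apply_mem hωT
        have h1 : rst x T ω = x ω := rst_apply_mem (hT.st hx) hωT
        rw [h1, rst_apply_not_mem (Set.disjoint_right.mp hd hxT),
          rst_apply_mem (hst _ hx) (Or.inr hωT)]
      · have h1 : rst x T ω = ω := rst_apply_not_mem hωT
        rw [h1]
        by_cases hωS : ω ∈ S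
        · rw [rst_apply_mem (hS.st hx) hωS, rst_apply_mem (hst _ hx) (Or.inl hωS)]
        · rw [rst_apply_not_mem hωS,
            rst_apply_not_mem (fun hc : ω ∈ S ∪ T => hc.elim hωS hωT)]
    show rst x (S ∪ T) ∈ rstSet X S * rstSet X T
    rw [key]
    exact Set.mul_mem_mul (rst_mem_rstSet hx) (rst_mem_rstSet hx)

lemma rstSet_ssupp {X : Set (Equiv.Perm ℕ)} : rstSet X (ssupp X) = X := by
  ext x
  constructor
  · rintro ⟨y, hy, rfl⟩
    rwa [rst_eq_self (psupp_subset_ssupp hy)]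
  · intro hx
    exact ⟨x, hx, rst_eq_self (psupp_subset_ssupp hx)⟩

lemma rstSet_empty {X : Set (Equiv.Perm ℕ)} (h : X.Nonempty) :
    rstSet X (∅ : Set ℕ) = {1} := by
  ext y
  constructor
  · rintro ⟨x, hx, rfl⟩
    simp [rst_empty]
  · rintro rfl
    obtain ⟨x, hx⟩ := h
    exact ⟨x, hx, rst_empty⟩

/-! ### Support of products -/

lemma ssupp_mul {U V : Set (Equiv.Perm ℕ)} (hd : Disjoint (ssupp U) (ssupp V))
    (hU : U.Nonempty) (hV : V.Nonempty) : ssupp (U * V) = ssupp U ∪ ssupp V := by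
  have hpd : ∀ u ∈ U, ∀ v ∈ V, Disjoint (psupp u) (psupp v) := fun u hu v hv =>
    Set.disjoint_of_subset (psupp_subset_ssupp hu) (psupp_subset_ssupp hv) hd
  ext ω
  constructor
  · intro hω
    rcases Set.mem_iUnion₂.mp hω with ⟨w, hw, hωw⟩
    rw [Set.mem_mul] at hw
    obtain ⟨u, hu, v, hv, rfl⟩ := hw
    rcases psupp_mul_subset hωw with h | h
    · exact Or.inl (psupp_subset_ssupp hu h)
    · exact Or.inr (psupp_subset_ssupp hv h)
  · intro hω
    rcases hω with h | h
    · rcases Set.mem_iUnion₂.mp h with ⟨u, hu, hωu⟩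
      obtain ⟨v, hv⟩ := hV
      apply Set.mem_biUnion (Set.mul_mem_mul hu hv)
      rw [psupp_mul_eq (hpd u hu v hv)]
      exact Or.inl hωu
    · rcases Set.mem_iUnion₂.mp h with ⟨v, hv, hωv⟩
      obtain ⟨u, hu⟩ := hU
      apply Set.mem_biUnion (Set.mul_mem_mul hu hv)
      rw [psupp_mul_eq (hpd u hu v hv)]
      exact Or.inr hωv

lemma memF_mul {U V : Set (Equiv.Perm ℕ)} (hU : memF U) (hV : memF V)
    (hd : Disjoint (ssupp U) (ssupp V)) : memF (U * V) := by
  refine ⟨hU.1.mul hV.1, hU.2.1.mul hV.2.1, ?_, ?_⟩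
  · intro hc
    have h1 : (ssupp (U * V)).Nonempty := by
      rw [ssupp_mul hd hU.2.1 hV.2.1]
      exact (memF_ssupp_nonempty hU).mono Set.subset_union_left
    rw [hc, ssupp_singleton_one] at h1
    exact Set.not_nonempty_empty h1
  · intro ρ hρ
    rw [Set.mem_mul] at hρ
    obtain ⟨u, hu, v, hv, rfl⟩ := hρ
    exact ((hU.2.2.2 u hu).union (hV.2.2.2 v hv)).subset psupp_mul_subset

/-- The support of the left factor is a block of a product. -/
lemma isBlk_mul_left {U V : Set (Equiv.Perm ℕ)} (hU : memF U) (hV : memF V)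
    (hd : Disjoint (ssupp U) (ssupp V)) : IsBlk (U * V) (ssupp U) := by
  have hsub : ssupp U ⊆ ssupp (U * V) := by
    rw [ssupp_mul hd hU.2.1 hV.2.1]; exact Set.subset_union_left
  have hst : ∀ w ∈ U * V, StSet w (ssupp U) := by
    intro w hw
    rw [Set.mem_mul] at hw
    obtain ⟨u, hu, v, hv, rfl⟩ := hw
    exact (stset_ssupp hu).mul
      (stset_of_disjoint (Set.disjoint_of_subset (psupp_subset_ssupp hv) subset_rfl hd.symm))
  refine ⟨hsub, hst, ?_⟩
  rintro w hw w' hw'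
  rw [Set.mem_mul] at hw hw'
  obtain ⟨u, hu, v, hv, rfl⟩ := hw
  obtain ⟨u', hu', v', hv', rfl⟩ := hw'
  have key : mixp (u * v) (u' * v') (ssupp U) = u * v' := by
    ext ω
    by_cases hω : ω ∈ ssupp U
    · rw [mixp_apply_mem (hst _ (Set.mul_mem_mul hu hv)) hω]
      have h1 : v ω = ω := apply_eq_of_not_mem_psupp
        (fun hm => Set.disjoint_left.mp hd hω (psupp_subset_ssupp hv hm))
      have h2 : v' ω = ω := apply_eq_of_not_mem_psupp
        (fun hm => Set.disjoint_left.mp hd hω (psupp_subset_ssupp hv' hm))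
      show u (v ω) = u (v' ω)
      rw [h1, h2]
    · rw [mixp_apply_not_mem (hst _ (Set.mul_mem_mul hu' hv')) hω]
      have hv'ω : v' ω ∉ ssupp U := by
        by_cases hm : ω ∈ psupp v'
        · exact fun hc => Set.disjoint_left.mp hd hc
            (psupp_subset_ssupp hv' (apply_mem_psupp hm))
        · rw [apply_eq_of_not_mem_psupp hm]; exact hω
      have h1 : u (v' ω) = v' ω := apply_eq_of_not_mem_psupp
        (fun hm => hv'ω (psupp_subset_ssupp hu hm))
      have h2 : u' (v' ω) = v' ω := apply_eq_of_not_mem_psupp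
        (fun hm => hv'ω (psupp_subset_ssupp hu' hm))
      show u' (v' ω) = u (v' ω)
      rw [h1, h2]
  rw [key]
  exact Set.mul_mem_mul hu hv'

/-- Restriction of a product to the support of the left factor. -/
lemma rstSet_mul_left {U V : Set (Equiv.Perm ℕ)} (hU : memF U) (hV : memF V)
    (hd : Disjoint (ssupp U) (ssupp V)) : rstSet (U * V) (ssupp U) = U := by
  have hrst : ∀ u ∈ U, ∀ v ∈ V, rst (u * v) (ssupp U) = u := by
    intro u hu v hv
    have hst : StSet (u * v) (ssupp U) :=
      (isBlk_mul_left hU hV hd).st (Set.mul_mem_mul hu hv)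
    ext ω
    by_cases hω : ω ∈ ssupp U
    · rw [rst_apply_mem hst hω]
      have h1 : v ω = ω := apply_eq_of_not_mem_psupp
        (fun hm => Set.disjoint_left.mp hd hω (psupp_subset_ssupp hv hm))
      show u (v ω) = u ω
      rw [h1]
    · rw [rst_apply_not_mem hω,
        apply_eq_of_not_mem_psupp (fun hm => hω (psupp_subset_ssupp hu hm))]
  ext y
  constructor
  · rintro ⟨w, hw, rfl⟩
    rw [Set.mem_mul] at hw
    obtain ⟨u, hu, v, hv, rfl⟩ := hw
    rw [hrst u hu v hv]
    exact hu
  · intro hy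
    obtain ⟨v, hv⟩ := hV.2.1
    exact ⟨y * v, Set.mul_mem_mul hy hv, hrst y hy v hv⟩

/-- Restriction of a product to a subset of the support of the left factor. -/
lemma rstSet_mul_subset_left {U V : Set (Equiv.Perm ℕ)} {S : Set ℕ} (hV : V.Nonempty)
    (hS : S ⊆ ssupp U) (hd : Disjoint (ssupp U) (ssupp V))
    (hstU : ∀ u ∈ U, StSet u S) (hstW : ∀ w ∈ U * V, StSet w S) :
    rstSet (U * V) S = rstSet U S := by
  have hrst : ∀ u ∈ U, ∀ v ∈ V, rst (u * v) S = rst u S := by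
    intro u hu v hv
    ext ω
    by_cases hω : ω ∈ S
    · rw [rst_apply_mem (hstW _ (Set.mul_mem_mul hu hv)) hω, rst_apply_mem (hstU u hu) hω]
      have h1 : v ω = ω := apply_eq_of_not_mem_psupp
        (fun hm => Set.disjoint_left.mp hd (hS hω) (psupp_subset_ssupp hv hm))
      show u (v ω) = u ω
      rw [h1]
    · rw [rst_apply_not_mem hω, rst_apply_not_mem hω]
  ext y
  constructor
  · rintro ⟨w, hw, rfl⟩
    rw [Set.mem_mul] at hw
    obtain ⟨u, hu, v, hv, rfl⟩ := hw
    rw [hrst u hu v hv]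
    exact rst_mem_rstSet hu
  · rintro ⟨u, hu, rfl⟩
    obtain ⟨v, hv⟩ := hV
    exact ⟨u * v, Set.mul_mem_mul hu hv, hrst u hu v hv⟩

/-! ### Transfer of blocks between a set and its restrictions -/

lemma rst_rst {x : Equiv.Perm ℕ} {S T : Set ℕ} (hT : T ⊆ S) (hx : StSet x S)
    (hxT : StSet x T) : rst (rst x S) T = rst x T := by
  have h1 : StSet (rst x S) T := by
    intro ω
    by_cases hω : ω ∈ S
    · rw [rst_apply_mem hx hω]; exact hxT ω
    · rw [rst_apply_not_mem hω]
  ext ω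
  by_cases hω : ω ∈ T
  · rw [rst_apply_mem h1 hω, rst_apply_mem hxT hω, rst_apply_mem hx (hT hω)]
  · rw [rst_apply_not_mem hω, rst_apply_not_mem hω]

/-- A block of a restriction is a block of the original set. -/
lemma IsBlk.of_rstSet {X : Set (Equiv.Perm ℕ)} {S T : Set ℕ} (hS : IsBlk X S) (hT : T ⊆ S)
    (h : IsBlk (rstSet X S) T) : IsBlk X T := by
  have hst : ∀ x ∈ X, StSet x T := by
    intro x hx ω
    have := h.st (rst_mem_rstSet (S := S) hx) ω
    by_cases hω : ω ∈ S
    · rwa [rst_apply_mem (hS.st hx) hω] at this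
    · have hωT : ω ∉ T := fun hc => hω (hT hc)
      have hxS : x ω ∉ S := fun hc => hω ((hS.st hx ω).mpr hc)
      exact ⟨fun hc => absurd hc hωT, fun hc => absurd hc (fun h2 : x ω ∈ T => hxS (hT h2))⟩
  refine ⟨fun ω hω => hS.subset (hT hω), hst, ?_⟩
  intro x hx y hy
  -- mix the restrictions, realize it as the restriction of some x'' ∈ X
  obtain ⟨z, hz, hze⟩ := h.mix (rst_mem_rstSet (S := S) hx) (rst_mem_rstSet (S := S) hy)
  -- hze : rst z S = mixp (rst x S) (rst y S) T
  have key : mixp x y T = mixp z y S := by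
    ext ω
    by_cases hωT : ω ∈ T
    · have h1 : mixp (rst x S) (rst y S) T ω = rst x S ω :=
        mixp_apply_mem (h.st (rst_mem_rstSet hx)) hωT
      have h2 : rst z S ω = z ω := rst_apply_mem (hS.st hz) (hT hωT)
      rw [mixp_apply_mem (hst x hx) hωT, mixp_apply_mem (hS.st hz) (hT hωT)]
      rw [hze, h1, rst_apply_mem (hS.st hx) (hT hωT)] at h2
      exact h2
    · rw [mixp_apply_not_mem (hst y hy) hωT]
      by_cases hωS : ω ∈ S
      · have h1 : mixp (rst x S) (rst y S) T ω = rst y S ω :=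
          mixp_apply_not_mem (h.st (rst_mem_rstSet hy)) hωT
        have h2 : rst z S ω = z ω := rst_apply_mem (hS.st hz) hωS
        rw [mixp_apply_mem (hS.st hz) hωS]
        rw [hze, h1, rst_apply_mem (hS.st hy) hωS] at h2
        exact h2
      · rw [mixp_apply_not_mem (hS.st hy) hωS]
  rw [key]
  exact hS.mix hz hy

/-- A block of the original set inside `S` is a block of the restriction to `S`. -/
lemma IsBlk.to_rstSet {X : Set (Equiv.Perm ℕ)} {S T : Set ℕ} (hS : IsBlk X S) (hT : T ⊆ S)
    (h : IsBlk X T) : IsBlk (rstSet X S) T := by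
  have hst : ∀ y ∈ rstSet X S, StSet y T := by
    rintro y ⟨x, hx, rfl⟩ ω
    by_cases hω : ω ∈ S
    · rw [rst_apply_mem (hS.st hx) hω]; exact h.st hx ω
    · rw [rst_apply_not_mem hω]
  have hsub : T ⊆ ssupp (rstSet X S) := by
    rw [ssupp_rstSet (fun x hx => hS.st hx)]
    exact fun ω hω => ⟨hT hω, h.subset hω⟩
  refine ⟨hsub, hst, ?_⟩
  rintro u ⟨x, hx, rfl⟩ v ⟨y, hy, rfl⟩
  have hmix : mixp x y T ∈ X := h.mix hx hy
  have key : mixp (rst x S) (rst y S) T = rst (mixp x y T) S := by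
    ext ω
    by_cases hωT : ω ∈ T
    · rw [mixp_apply_mem (hst _ (rst_mem_rstSet hx)) hωT,
        rst_apply_mem (hS.st hx) (hT hωT), rst_apply_mem (hS.st hmix) (hT hωT),
        mixp_apply_mem (h.st hx) hωT]
    · rw [mixp_apply_not_mem (hst _ (rst_mem_rstSet hy)) hωT]
      by_cases hωS : ω ∈ S
      · rw [rst_apply_mem (hS.st hy) hωS, rst_apply_mem (hS.st hmix) hωS,
          mixp_apply_not_mem (h.st hy) hωT]
      · rw [rst_apply_not_mem hωS, rst_apply_not_mem hωS]
  rw [key]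
  exact rst_mem_rstSet hmix

/-! ### Minimal blocks -/

/-- A minimal (nonempty) block. -/
def MinBlk (X : Set (Equiv.Perm ℕ)) (S : Set ℕ) : Prop :=
  IsBlk X S ∧ S.Nonempty ∧ ∀ T, IsBlk X T → T ⊆ S → T.Nonempty → T = S

lemma minBlk_disjoint {X : Set (Equiv.Perm ℕ)} {S T : Set ℕ} (hS : MinBlk X S)
    (hT : MinBlk X T) (hne : S ≠ T) : Disjoint S T := by
  rw [Set.disjoint_iff_inter_eq_empty]
  by_contra hc
  have hST : (S ∩ T).Nonempty := Set.nonempty_iff_ne_empty.mpr hc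
  have h1 := hS.2.2 _ (hS.1.inter hT.1) Set.inter_subset_left hST
  have h2 := hT.2.2 _ (hS.1.inter hT.1) Set.inter_subset_right hST
  exact hne (h1 ▸ h2)

lemma minBlk_subset_of_inter {X : Set (Equiv.Perm ℕ)} {S T : Set ℕ} (hS : MinBlk X S)
    (hT : IsBlk X T) (h : (S ∩ T).Nonempty) : S ⊆ T := by
  have := hS.2.2 _ (hS.1.inter hT) Set.inter_subset_left h
  rw [← this]
  exact Set.inter_subset_right

/-- Every point of the support lies in a minimal block. -/
lemma exists_minBlk {X : Set (Equiv.Perm ℕ)} (hfin : (ssupp X).Finite) {ω : ℕ}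
    (hω : ω ∈ ssupp X) : ∃ S, MinBlk X S ∧ ω ∈ S := by
  -- strong induction on the cardinality of a block containing ω
  suffices h : ∀ n (S : Set ℕ), IsBlk X S → ω ∈ S → S.ncard ≤ n → ∃ M, MinBlk X M ∧ ω ∈ M by
    exact h (ssupp X).ncard (ssupp X) isBlk_ssupp hω le_rfl
  intro n
  induction n with
  | zero =>
    intro S hS hωS hcard
    have hfinS : S.Finite := hfin.subset hS.subset
    have : S.ncard = 0 := Nat.le_zero.mp hcard
    rw [Set.ncard_eq_zero hfinS] at this
    exact absurd (this ▸ hωS) (Set.notMem_empty ω)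
  | succ n ih =>
    intro S hS hωS hcard
    by_cases hmin : ∀ T, IsBlk X T → T ⊆ S → T.Nonempty → T = S
    · exact ⟨S, ⟨hS, ⟨ω, hωS⟩, hmin⟩, hωS⟩
    · push_neg at hmin
      obtain ⟨T, hT, hTS, hTne, hTneq⟩ := hmin
      have hfinS : S.Finite := hfin.subset hS.subset
      by_cases hωT : ω ∈ T
      · have hlt : T.ncard < S.ncard :=
          Set.ncard_lt_ncard (hTS.ssubset_of_ne hTneq) hfinS
        exact ih T hT hωT (by omega)
      · -- use S ∩ (ssupp X \ T)
        set T' := S ∩ (ssupp X \ T) with hT'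
        have hT'blk : IsBlk X T' := hS.inter hT.compl
        have hωT' : ω ∈ T' := ⟨hωS, hS.subset hωS, hωT⟩
        have hT'S : T' ⊆ S := Set.inter_subset_left
        have hT'neq : T' ≠ S := by
          intro hc
          obtain ⟨τ, hτ⟩ := hTne
          have : τ ∈ T' := hc.symm ▸ (hTS hτ)
          exact this.2.2 hτ
        have hlt : T'.ncard < S.ncard :=
          Set.ncard_lt_ncard (hT'S.ssubset_of_ne hT'neq) hfinS
        exact ih T' hT'blk hωT' (by omega)

/-- Restriction of `X` to a minimal block is irreducible. -/
lemma isIrred_rstSet_minBlk {X : Set (Equiv.Perm ℕ)} (hX : memF X) {S : Set ℕ}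
    (hS : MinBlk X S) : IsIrred (rstSet X S) := by
  refine ⟨memF_rstSet hX hS.1 hS.2.1, ?_⟩
  intro U V hU hV hd he
  -- ssupp U is a block of rstSet X S, hence of X, contained in S
  have hsupp : ssupp (rstSet X S) = S := by
    rw [ssupp_rstSet (fun x hx => hS.1.st hx), Set.inter_eq_self_of_subset_left hS.1.subset]
  have hUblk : IsBlk (rstSet X S) (ssupp U) := he ▸ isBlk_mul_left hU hV hd
  have hUsub : ssupp U ⊆ S := by
    have := hUblk.subset
    rwa [hsupp] at this
  have hUblkX : IsBlk X (ssupp U) := hS.1.of_rstSet hUsub hUblk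
  have hUeq : ssupp U = S := hS.2.2 _ hUblkX hUsub (memF_ssupp_nonempty hU)
  -- but ssupp V is nonempty and contained in S, disjoint from ssupp U = S
  have hVblk : IsBlk (rstSet X S) (ssupp V) := by
    have : U * V = V * U := by
      apply Set.Subset.antisymm
      · rintro w hw
        rw [Set.mem_mul] at hw
        obtain ⟨u, hu, v, hv, rfl⟩ := hw
        rw [commute_of_disjoint_psupp (Set.disjoint_of_subset (psupp_subset_ssupp hu)
          (psupp_subset_ssupp hv) hd)]
        exact Set.mul_mem_mul hv hu
      · rintro w hw
        rw [Set.mem_mul] at hw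
        obtain ⟨v, hv, u, hu, rfl⟩ := hw
        rw [← commute_of_disjoint_psupp (Set.disjoint_of_subset (psupp_subset_ssupp hu)
          (psupp_subset_ssupp hv) hd)]
        exact Set.mul_mem_mul hu hv
    have he' : rstSet X S = V * U := by rw [he, this]
    exact he' ▸ isBlk_mul_left hV hU hd.symm
  have hVsub : ssupp V ⊆ S := by
    have := hVblk.subset
    rwa [hsupp] at this
  obtain ⟨τ, hτ⟩ := memF_ssupp_nonempty hV
  have : τ ∈ ssupp U := hUeq ▸ hVsub hτ
  exact Set.disjoint_left.mp hd this hτ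

/-- Commutation of two sets with disjoint supports. -/
lemma set_commute {U V : Set (Equiv.Perm ℕ)} (hd : Disjoint (ssupp U) (ssupp V)) :
    U * V = V * U := by
  apply Set.Subset.antisymm
  · rintro w hw
    rw [Set.mem_mul] at hw
    obtain ⟨u, hu, v, hv, rfl⟩ := hw
    rw [commute_of_disjoint_psupp (Set.disjoint_of_subset (psupp_subset_ssupp hu)
      (psupp_subset_ssupp hv) hd)]
    exact Set.mul_mem_mul hv hu
  · rintro w hw
    rw [Set.mem_mul] at hw
    obtain ⟨v, hv, u, hu, rfl⟩ := hw
    rw [← commute_of_disjoint_psupp (Set.disjoint_of_subset (psupp_subset_ssupp hu)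
      (psupp_subset_ssupp hv) hd)]
    exact Set.mul_mem_mul hu hv

/-! ### Decomposition into the product of restrictions to blocks -/

lemma isBlk_empty {X : Set (Equiv.Perm ℕ)} : IsBlk X (∅ : Set ℕ) := by
  refine ⟨Set.empty_subset _, fun x hx ω => ?_, fun x hx y hy => ?_⟩
  · simp
  · have hst : StSet y (∅ : Set ℕ) := fun ω => by simp
    have : mixp x y (∅ : Set ℕ) = y := by
      ext ω
      rw [mixp_apply_not_mem hst (Set.notMem_empty ω)]
    rw [this]; exact hy

lemma isBlk_foldr {X : Set (Equiv.Perm ℕ)} {l : List (Set ℕ)} (h : ∀ S ∈ l, IsBlk X S) :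
    IsBlk X (l.foldr (· ∪ ·) ∅) := by
  induction l with
  | nil => exact isBlk_empty
  | cons S l ih =>
    exact (h S (List.mem_cons_self)).union
      (ih (fun T hT => h T (List.mem_cons_of_mem S hT)))

lemma mem_foldr_union {l : List (Set ℕ)} {ω : ℕ} :
    ω ∈ l.foldr (· ∪ ·) ∅ ↔ ∃ S ∈ l, ω ∈ S := by
  induction l with
  | nil => simp
  | cons S l ih =>
    simp only [List.foldr_cons, Set.mem_union, ih, List.mem_cons]
    constructor
    · rintro (h | ⟨T, hT, hω⟩)
      · exact ⟨S, Or.inl rfl, h⟩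
      · exact ⟨T, Or.inr hT, hω⟩
    · rintro ⟨T, (rfl | hT), hω⟩
      · exact Or.inl hω
      · exact Or.inr ⟨T, hT, hω⟩

lemma disjoint_foldr {l : List (Set ℕ)} {S : Set ℕ} (h : ∀ T ∈ l, Disjoint S T) :
    Disjoint S (l.foldr (· ∪ ·) ∅) := by
  induction l with
  | nil => simp
  | cons T l ih =>
    simp only [List.foldr_cons, Set.disjoint_union_right]
    exact ⟨h T (List.mem_cons_self), ih (fun R hR => h R (List.mem_cons_of_mem T hR))⟩

lemma prod_rstSet_list {X : Set (Equiv.Perm ℕ)} (hne : X.Nonempty) :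
    ∀ l : List (Set ℕ), (∀ S ∈ l, IsBlk X S) → l.Pairwise Disjoint →
      (l.map (rstSet X)).prod = rstSet X (l.foldr (· ∪ ·) ∅) := by
  intro l
  induction l with
  | nil =>
    intro _ _
    simp only [List.map_nil, List.prod_nil, List.foldr_nil]
    rw [rstSet_empty hne]
    rfl
  | cons S l ih =>
    intro hblk hpw
    simp only [List.map_cons, List.prod_cons, List.foldr_cons]
    rw [ih (fun T hT => hblk T (List.mem_cons_of_mem S hT)) hpw.of_cons]
    exact rstSet_mul_rstSet (hblk S (List.mem_cons_self))
      (isBlk_foldr (fun T hT => hblk T (List.mem_cons_of_mem S hT)))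
      (disjoint_foldr (fun T hT => (List.pairwise_cons.mp hpw).1 T hT))

lemma ssupp_rstSet_blk {X : Set (Equiv.Perm ℕ)} {S : Set ℕ} (hS : IsBlk X S) :
    ssupp (rstSet X S) = S := by
  rw [ssupp_rstSet (fun x hx => hS.st hx), Set.inter_eq_self_of_subset_left hS.subset]

/-- The set of minimal blocks of `X` is finite. -/
lemma minBlk_finite {X : Set (Equiv.Perm ℕ)} (hfin : (ssupp X).Finite) :
    {S | MinBlk X S}.Finite :=
  Set.Finite.subset hfin.finite_subsets (fun S hS => hS.1.subset)

/-- The canonical decomposition of `X` into irreducibles, given by the minimal blocks. -/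
noncomputable def decompList (X : Set (Equiv.Perm ℕ)) (hfin : (ssupp X).Finite) :
    List (Set (Equiv.Perm ℕ)) :=
  ((minBlk_finite hfin).toFinset.toList).map (rstSet X)

lemma decompList_mem {X : Set (Equiv.Perm ℕ)} (hfin : (ssupp X).Finite) {S : Set ℕ}
    (hS : MinBlk X S) : rstSet X S ∈ decompList X hfin := by
  apply List.mem_map_of_mem
  rw [Finset.mem_toList, Set.Finite.mem_toFinset]
  exact hS

lemma decompList_irred {X : Set (Equiv.Perm ℕ)} (hX : memF X) (hfin : (ssupp X).Finite) :
    ∀ W ∈ decompList X hfin, IsIrred W := by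
  intro W hW
  rcases List.mem_map.mp hW with ⟨S, hSmem, rfl⟩
  rw [Finset.mem_toList, Set.Finite.mem_toFinset] at hSmem
  exact isIrred_rstSet_minBlk hX hSmem

lemma decompList_pairwise {X : Set (Equiv.Perm ℕ)} (hfin : (ssupp X).Finite) :
    (decompList X hfin).Pairwise (fun A B => Disjoint (ssupp A) (ssupp B)) := by
  rw [decompList, List.pairwise_map]
  have hnd : ((minBlk_finite hfin).toFinset.toList).Pairwise (· ≠ ·) :=
    (Finset.nodup_toList _)
  apply hnd.imp_of_mem
  intro S T hSmem hTmem hne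
  rw [Finset.mem_toList, Set.Finite.mem_toFinset] at hSmem hTmem
  rw [ssupp_rstSet_blk hSmem.1, ssupp_rstSet_blk hTmem.1]
  exact minBlk_disjoint hSmem hTmem hne

lemma decompList_prod {X : Set (Equiv.Perm ℕ)} (hX : memF X) (hfin : (ssupp X).Finite) :
    X = (decompList X hfin).prod := by
  rw [decompList]
  have hblk : ∀ S ∈ (minBlk_finite hfin).toFinset.toList, IsBlk X S := by
    intro S hS
    rw [Finset.mem_toList, Set.Finite.mem_toFinset] at hS
    exact hS.1
  have hpw : ((minBlk_finite hfin).toFinset.toList).Pairwise Disjoint := by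
    apply (Finset.nodup_toList _).imp_of_mem
    intro S T hSmem hTmem hne
    rw [Finset.mem_toList, Set.Finite.mem_toFinset] at hSmem hTmem
    exact minBlk_disjoint hSmem hTmem hne
  rw [prod_rstSet_list hX.2.1 _ hblk hpw]
  have hunion : ((minBlk_finite hfin).toFinset.toList).foldr (· ∪ ·) ∅ = ssupp X := by
    apply Set.Subset.antisymm
    · intro ω hω
      rcases mem_foldr_union.mp hω with ⟨S, hSmem, hωS⟩
      exact (hblk S hSmem).subset hωS
    · intro ω hω
      obtain ⟨S, hS, hωS⟩ := exists_minBlk hfin hω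
      apply mem_foldr_union.mpr
      refine ⟨S, ?_, hωS⟩
      rw [Finset.mem_toList, Set.Finite.mem_toFinset]
      exact hS
  rw [hunion, rstSet_ssupp]

/-! ### Transfer of minimal blocks to a restriction -/

lemma minBlk_to_rstSet {X : Set (Equiv.Perm ℕ)} {A S : Set ℕ} (hA : IsBlk X A) (hSA : S ⊆ A)
    (hS : MinBlk X S) : MinBlk (rstSet X A) S := by
  refine ⟨hA.to_rstSet hSA hS.1, hS.2.1, ?_⟩
  intro T hT hTS hTne
  exact hS.2.2 T (hA.of_rstSet (hTS.trans hSA) hT) hTS hTne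

lemma minBlk_of_rstSet {X : Set (Equiv.Perm ℕ)} {A S : Set ℕ} (hA : IsBlk X A) (hSA : S ⊆ A)
    (hS : MinBlk (rstSet X A) S) : MinBlk X S := by
  refine ⟨hA.of_rstSet hSA hS.1, hS.2.1, ?_⟩
  intro T hT hTS hTne
  exact hS.2.2 T (hA.to_rstSet (hTS.trans hSA) hT) hTS hTne

lemma rstSet_rstSet {X : Set (Equiv.Perm ℕ)} {A S : Set ℕ} (hA : IsBlk X A) (hSA : S ⊆ A)
    (hS : ∀ x ∈ X, StSet x S) : rstSet (rstSet X A) S = rstSet X S := by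
  ext y
  constructor
  · rintro ⟨u, ⟨x, hx, rfl⟩, rfl⟩
    rw [rst_rst hSA (hA.st hx) (hS x hx)]
    exact rst_mem_rstSet hx
  · rintro ⟨x, hx, rfl⟩
    exact ⟨rst x A, rst_mem_rstSet hx, rst_rst hSA (hA.st hx) (hS x hx)⟩

/-! ### Conjugation -/

lemma conjR_apply (g x : Equiv.Perm ℕ) (ω : ℕ) : conjR g x ω = g⁻¹ (x (g ω)) := rfl

lemma conjR_conjR (g h x : Equiv.Perm ℕ) : conjR g (conjR h x) = conjR (h * g) x := by
  simp only [conjR, mul_inv_rev]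
  group

lemma conjR_one_g (x : Equiv.Perm ℕ) : conjR 1 x = x := by
  simp [conjR]

lemma conjSet_one (X : Set (Equiv.Perm ℕ)) : conjSet 1 X = X := by
  simp [conjSet, conjR_one_g]

lemma conjSet_conjSet (g h : Equiv.Perm ℕ) (X : Set (Equiv.Perm ℕ)) :
    conjSet g (conjSet h X) = conjSet (h * g) X := by
  simp only [conjSet, ← Set.image_comp]
  apply Set.image_congr
  intro x _
  exact conjR_conjR g h x

lemma psupp_conjR (g x : Equiv.Perm ℕ) : psupp (conjR g x) = ⇑g ⁻¹' psupp x := by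
  ext ω
  simp only [psupp, Set.mem_setOf_eq, Set.mem_preimage, conjR_apply]
  constructor
  · intro h hc
    apply h
    rw [hc, Equiv.Perm.inv_apply_self]
  · intro h hc
    apply h
    have := congrArg g hc
    rwa [Equiv.Perm.apply_inv_self] at this

lemma ssupp_conjSet (g : Equiv.Perm ℕ) (X : Set (Equiv.Perm ℕ)) :
    ssupp (conjSet g X) = ⇑g ⁻¹' ssupp X := by
  ext ω
  constructor
  · intro hω
    rcases Set.mem_iUnion₂.mp hω with ⟨u, ⟨x, hx, rfl⟩, hωu⟩
    rw [psupp_conjR] at hωu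
    exact psupp_subset_ssupp hx hωu
  · intro hω
    rcases Set.mem_iUnion₂.mp hω with ⟨x, hx, hgω⟩
    apply Set.mem_biUnion (Set.mem_image_of_mem (conjR g) hx)
    rw [psupp_conjR]
    exact hgω

lemma mem_setStab_iff_conjSet_eq {g : Equiv.Perm ℕ} {X : Set (Equiv.Perm ℕ)} :
    g ∈ setStab X ↔ conjSet g X = X := by
  constructor
  · intro hg
    apply Set.Subset.antisymm
    · rintro y ⟨x, hx, rfl⟩
      exact conjR_mem hg hx
    · intro x hx
      refine ⟨g * x * g⁻¹, conjL_mem hg hx, ?_⟩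
      show g⁻¹ * (g * x * g⁻¹) * g = x
      group
  · intro he
    intro x
    constructor
    · intro hx
      have : conjR g x ∈ conjSet g X := Set.mem_image_of_mem _ hx
      rwa [he] at this
    · intro hx
      rw [← he] at hx
      rcases hx with ⟨y, hy, hye⟩
      have : y = x := by
        have := hye
        simp only [conjR] at this
        have h2 := congrArg (fun z => g * z * g⁻¹) this
        calc y = g * (g⁻¹ * x * g) * g⁻¹ := by rw [← h2]; group
        _ = x := by group
      rwa [← this]

lemma conjR_rst (g x : Equiv.Perm ℕ) {S : Set ℕ} (hx : StSet x S) :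
    conjR g (rst x S) = rst (conjR g x) (⇑g ⁻¹' S) := by
  have hst : StSet (conjR g x) (⇑g ⁻¹' S) := by
    intro ω
    simp only [Set.mem_preimage, conjR_apply]
    constructor
    · intro h
      have := (hx (g ω)).mp h
      rwa [Equiv.Perm.apply_inv_self]
    · intro h
      apply (hx (g ω)).mpr
      rwa [Equiv.Perm.apply_inv_self] at h
  ext ω
  rw [conjR_apply]
  by_cases hω : g ω ∈ S
  · rw [rst_apply_mem hx hω, rst_apply_mem hst (by simpa using hω), conjR_apply]
  · rw [rst_apply_not_mem hω, rst_apply_not_mem (by simpa using hω),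
      Equiv.Perm.inv_apply_self]

lemma conjSet_rstSet (g : Equiv.Perm ℕ) {X : Set (Equiv.Perm ℕ)} {S : Set ℕ}
    (hst : ∀ x ∈ X, StSet x S) :
    conjSet g (rstSet X S) = rstSet (conjSet g X) (⇑g ⁻¹' S) := by
  ext y
  constructor
  · rintro ⟨u, ⟨x, hx, rfl⟩, rfl⟩
    rw [conjR_rst g x (hst x hx)]
    exact rst_mem_rstSet (Set.mem_image_of_mem _ hx)
  · rintro ⟨u, ⟨x, hx, rfl⟩, rfl⟩
    exact ⟨rst x S, rst_mem_rstSet hx, conjR_rst g x (hst x hx)⟩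

lemma conjR_mul (g u v : Equiv.Perm ℕ) : conjR g (u * v) = conjR g u * conjR g v := by
  simp only [conjR]
  group

lemma conjSet_mul (g : Equiv.Perm ℕ) (U V : Set (Equiv.Perm ℕ)) :
    conjSet g (U * V) = conjSet g U * conjSet g V := by
  ext w
  constructor
  · rintro ⟨x, hx, rfl⟩
    rw [Set.mem_mul] at hx
    obtain ⟨u, hu, v, hv, rfl⟩ := hx
    rw [conjR_mul]
    exact Set.mul_mem_mul (Set.mem_image_of_mem _ hu) (Set.mem_image_of_mem _ hv)
  · intro hw
    rw [Set.mem_mul] at hw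
    obtain ⟨u', ⟨u, hu, rfl⟩, v', ⟨v, hv, rfl⟩, rfl⟩ := hw
    exact ⟨u * v, Set.mul_mem_mul hu hv, conjR_mul g u v⟩

/-- Membership in `NX`. -/
lemma mem_NX_iff {g : Equiv.Perm ℕ} {X : Set (Equiv.Perm ℕ)} :
    g ∈ NX X ↔ g ∈ symOn (ssupp X) ∧ conjSet g X = X := by
  rw [NX, Subgroup.mem_inf, mem_setStab_iff_conjSet_eq]

lemma psupp_subset_of_symOn {g : Equiv.Perm ℕ} {α : Set ℕ} (h : g ∈ symOn α) :
    psupp g ⊆ α := by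
  intro ω hω
  by_contra hc
  exact hω (h ω hc)

lemma symOn_stset {g : Equiv.Perm ℕ} {α : Set ℕ} (h : g ∈ symOn α) : StSet g α :=
  stset_of_psupp_subset (psupp_subset_of_symOn h)

/-! ### Blocks are permuted by the normalizer -/

lemma preimage_preimage_inv (k : Equiv.Perm ℕ) (S : Set ℕ) :
    ⇑k⁻¹ ⁻¹' (⇑k ⁻¹' S) = S := by
  ext ω
  simp [Set.mem_preimage]

lemma isBlk_preimage {W : Set (Equiv.Perm ℕ)} {S : Set ℕ} {k : Equiv.Perm ℕ}
    (hk : k ∈ NX W) (hS : IsBlk W S) : IsBlk W (⇑k ⁻¹' S) := by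
  obtain ⟨hk1, hk2⟩ := Subgroup.mem_inf.mp hk
  have hpk : psupp k ⊆ ssupp W := psupp_subset_of_symOn hk1
  have hst : ∀ x ∈ W, StSet x (⇑k ⁻¹' S) := by
    intro x hx ω
    have hconj : k * x * k⁻¹ ∈ W := conjL_mem hk2 hx
    have hstc := hS.st hconj
    simp only [Set.mem_preimage]
    have := hstc (k ω)
    have he : (k * x * k⁻¹) (k ω) = k (x ω) := by
      simp [Equiv.Perm.mul_apply]
    rwa [he] at this
  refine ⟨?_, hst, ?_⟩
  · intro ω hω
    by_contra hc
    have : k ω = ω := apply_eq_of_not_mem_psupp (fun hm => hc (hpk hm))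
    rw [Set.mem_preimage, this] at hω
    exact hc (hS.subset hω)
  · intro x hx y hy
    have hcx : k * x * k⁻¹ ∈ W := conjL_mem hk2 hx
    have hcy : k * y * k⁻¹ ∈ W := conjL_mem hk2 hy
    have hm : mixp (k * x * k⁻¹) (k * y * k⁻¹) S ∈ W := hS.mix hcx hcy
    have key : mixp x y (⇑k ⁻¹' S) = conjR k (mixp (k * x * k⁻¹) (k * y * k⁻¹) S) := by
      ext ω
      rw [conjR_apply]
      by_cases hω : k ω ∈ S
      · rw [mixp_apply_mem (hst x hx) (by simpa using hω), mixp_apply_mem (hS.st hcx) hω]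
        show x ω = k⁻¹ ((k * x * k⁻¹) (k ω))
        simp [Equiv.Perm.mul_apply]
      · rw [mixp_apply_not_mem (hst y hy) (by simpa using hω),
          mixp_apply_not_mem (hS.st hcy) hω]
        show y ω = k⁻¹ ((k * y * k⁻¹) (k ω))
        simp [Equiv.Perm.mul_apply]
    rw [key]
    exact conjR_mem hk2 hm

lemma minBlk_preimage {W : Set (Equiv.Perm ℕ)} {S : Set ℕ} {k : Equiv.Perm ℕ}
    (hk : k ∈ NX W) (hS : MinBlk W S) : MinBlk W (⇑k ⁻¹' S) := by
  refine ⟨isBlk_preimage hk hS.1, ?_, ?_⟩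
  · obtain ⟨s, hs⟩ := hS.2.1
    exact ⟨k⁻¹ s, by simp [Set.mem_preimage, hs]⟩
  · intro T hT hTS hTne
    have hkinv : k⁻¹ ∈ NX W := (NX W).inv_mem hk
    have hT' : IsBlk W (⇑k⁻¹ ⁻¹' T) := isBlk_preimage hkinv hT
    have hT'S : ⇑k⁻¹ ⁻¹' T ⊆ S := by
      intro ω hω
      have := hTS hω
      rwa [Set.mem_preimage, Equiv.Perm.apply_inv_self] at this
    have hT'ne : (⇑k⁻¹ ⁻¹' T).Nonempty := by
      obtain ⟨t, ht⟩ := hTne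
      exact ⟨k t, by simpa [Set.mem_preimage] using ht⟩
    have := hS.2.2 _ hT' hT'S hT'ne
    rw [← this]
    ext ω
    simp

/-! ### The subgroup preserving a set of points -/

/-- The subgroup of permutations stabilizing `A` setwise. -/
def presSub (A : Set ℕ) : Subgroup (Equiv.Perm ℕ) where
  carrier := {g | StSet g A}
  one_mem' := fun ω => by simp
  mul_mem' := fun ha hb => ha.mul hb
  inv_mem' := fun ha => ha.inv

lemma NX_le_presSub_self {X : Set (Equiv.Perm ℕ)} : NX X ≤ presSub (ssupp X) := by
  intro g hg
  exact symOn_stset (Subgroup.mem_inf.mp hg).1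

lemma NX_le_presSub_other {X Y : Set (Equiv.Perm ℕ)} (hd : Disjoint (ssupp X) (ssupp Y)) :
    NX Y ≤ presSub (ssupp X) := by
  intro g hg
  exact stset_of_disjoint
    (Set.disjoint_of_subset (psupp_subset_of_symOn (Subgroup.mem_inf.mp hg).1) subset_rfl
      hd.symm)

lemma conjSet_eq_self_of_disjoint {g : Equiv.Perm ℕ} {Y : Set (Equiv.Perm ℕ)}
    (h : Disjoint (psupp g) (ssupp Y)) : conjSet g Y = Y := by
  have : ∀ y ∈ Y, conjR g y = y := fun y hy =>
    conjR_eq_self_of_disjoint (Set.disjoint_of_subset subset_rfl (psupp_subset_ssupp hy) h)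
  ext y
  constructor
  · rintro ⟨x, hx, rfl⟩
    rw [this x hx]; exact hx
  · intro hy
    exact ⟨y, hy, this y hy⟩

/-- The join of the two normalizers is contained in the normalizer of the product. -/
lemma join_le_NX_mul {X Y : Set (Equiv.Perm ℕ)} (hX : memF X) (hY : memF Y)
    (hd : Disjoint (ssupp X) (ssupp Y)) : NX X ⊔ NX Y ≤ NX (X * Y) := by
  have hsupp : ssupp (X * Y) = ssupp X ∪ ssupp Y := ssupp_mul hd hX.2.1 hY.2.1
  apply sup_le
  · intro g hg
    obtain ⟨hg1, hg2⟩ := Subgroup.mem_inf.mp hg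
    apply mem_NX_iff.mpr
    constructor
    · intro ω hω
      apply hg1
      rw [hsupp] at hω
      exact fun hc => hω (Or.inl hc)
    · rw [conjSet_mul, (mem_setStab_iff_conjSet_eq).mp hg2,
        conjSet_eq_self_of_disjoint
          (Set.disjoint_of_subset (psupp_subset_of_symOn hg1) subset_rfl hd)]
  · intro g hg
    obtain ⟨hg1, hg2⟩ := Subgroup.mem_inf.mp hg
    apply mem_NX_iff.mpr
    constructor
    · intro ω hω
      apply hg1
      rw [hsupp] at hω
      exact fun hc => hω (Or.inr hc)
    · rw [conjSet_mul, (mem_setStab_iff_conjSet_eq).mp hg2,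
        conjSet_eq_self_of_disjoint
          (Set.disjoint_of_subset (psupp_subset_of_symOn hg1) subset_rfl hd.symm)]

/-! ### Supports of list products -/

lemma list_prod_nonempty {l : List (Set (Equiv.Perm ℕ))} (h : ∀ W ∈ l, W.Nonempty) :
    l.prod.Nonempty := by
  induction l with
  | nil => exact ⟨1, rfl⟩
  | cons W l ih =>
    rw [List.prod_cons]
    exact (h W (List.mem_cons_self)).mul (ih (fun U hU => h U (List.mem_cons_of_mem W hU)))

lemma ssupp_one_set : ssupp (1 : Set (Equiv.Perm ℕ)) = ∅ := by
  have : (1 : Set (Equiv.Perm ℕ)) = {1} := rfl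
  rw [this, ssupp_singleton_one]

lemma ssupp_list_prod {l : List (Set (Equiv.Perm ℕ))} (h : ∀ W ∈ l, W.Nonempty)
    (hpw : l.Pairwise (fun U V => Disjoint (ssupp U) (ssupp V))) :
    ssupp l.prod = (l.map ssupp).foldr (· ∪ ·) ∅ := by
  induction l with
  | nil =>
    simp only [List.prod_nil, List.map_nil, List.foldr_nil]
    exact ssupp_one_set
  | cons W l ih =>
    rw [List.prod_cons, List.map_cons, List.foldr_cons]
    have htail := ih (fun U hU => h U (List.mem_cons_of_mem W hU)) hpw.of_cons
    have hd : Disjoint (ssupp W) (ssupp l.prod) := by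
      rw [htail]
      apply disjoint_foldr
      intro T hT
      rcases List.mem_map.mp hT with ⟨U, hU, rfl⟩
      exact (List.pairwise_cons.mp hpw).1 U hU
    rw [ssupp_mul hd (h W (List.mem_cons_self))
      (list_prod_nonempty (fun U hU => h U (List.mem_cons_of_mem W hU))), htail]

lemma ssupp_mem_subset_prod {l : List (Set (Equiv.Perm ℕ))} {W : Set (Equiv.Perm ℕ)}
    (hW : W ∈ l) (h : ∀ U ∈ l, U.Nonempty)
    (hpw : l.Pairwise (fun U V => Disjoint (ssupp U) (ssupp V))) :
    ssupp W ⊆ ssupp l.prod := by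
  rw [ssupp_list_prod h hpw]
  intro ω hω
  exact mem_foldr_union.mpr ⟨ssupp W, List.mem_map_of_mem hW, hω⟩

/-! ### The forward direction: coprime implies no common irreducible factor -/

lemma coprime_implies_no_common {X Y : Set (Equiv.Perm ℕ)} (hX : memF X) (hY : memF Y)
    (hdisj : Disjoint (ssupp X) (ssupp Y)) (hco : CoprimeSets X Y) :
    ¬ ∃ (Z : Set (Equiv.Perm ℕ)) (LX LY : List (Set (Equiv.Perm ℕ))),
        IsIrred Z ∧
        (∀ W ∈ LX, IsIrred W) ∧
        LX.Pairwise (fun A B => Disjoint (ssupp A) (ssupp B)) ∧ X = LX.prod ∧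
        (∀ W ∈ LY, IsIrred W) ∧
        LY.Pairwise (fun A B => Disjoint (ssupp A) (ssupp B)) ∧ Y = LY.prod ∧
        (∃ W ∈ LX, EquivSet Z W) ∧ (∃ W ∈ LY, EquivSet Z W) := by
  classical
  rintro ⟨Z, LX, LY, hZirr, hLXirr, hLXpw, hXprod, hLYirr, hLYpw, hYprod,
    ⟨W₁, hW₁mem, a, ha⟩, ⟨W₂, hW₂mem, b, hb⟩⟩
  set h : Equiv.Perm ℕ := a⁻¹ * b with hh
  have h1 : conjSet a⁻¹ W₁ = Z := by rw [← ha, conjSet_conjSet, mul_inv_cancel, conjSet_one]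
  have hW2eq : conjSet h W₁ = W₂ := by rw [hh, ← conjSet_conjSet, h1, hb]
  -- supports
  have hW₁F : memF W₁ := (hLXirr W₁ hW₁mem).1
  have hW₂F : memF W₂ := (hLYirr W₂ hW₂mem).1
  set S₁ := ssupp W₁ with hS₁def
  set S₂ := ssupp W₂ with hS₂def
  have hLXne : ∀ U ∈ LX, U.Nonempty := fun U hU => ((hLXirr U hU).1).2.1
  have hLYne : ∀ U ∈ LY, U.Nonempty := fun U hU => ((hLYirr U hU).1).2.1
  have hS₁A : S₁ ⊆ ssupp X := hXprod ▸ ssupp_mem_subset_prod hW₁mem hLXne hLXpw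
  have hS₂B : S₂ ⊆ ssupp Y := hYprod ▸ ssupp_mem_subset_prod hW₂mem hLYne hLYpw
  have hS₁S₂ : Disjoint S₁ S₂ := Set.disjoint_of_subset hS₁A hS₂B hdisj
  have hS₂pre : ⇑h ⁻¹' S₁ = S₂ := by
    rw [hS₂def, ← hW2eq, ssupp_conjSet]
  have hmem12 : ∀ ω ∈ S₁, h⁻¹ ω ∈ S₂ := by
    intro ω hω
    rw [← hS₂pre, Set.mem_preimage, Equiv.Perm.apply_inv_self]
    exact hω
  have hmem21 : ∀ ω ∈ S₂, h ω ∈ S₁ := by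
    intro ω hω
    rw [← hS₂pre, Set.mem_preimage] at hω
    exact hω
  -- the swap permutation
  set f : ℕ → ℕ := fun ω => if ω ∈ S₁ then h⁻¹ ω else if ω ∈ S₂ then h ω else ω with hf
  have hinvol : ∀ ω, f (f ω) = ω := by
    intro ω
    by_cases h1ω : ω ∈ S₁
    · have e1 : f ω = h⁻¹ ω := if_pos h1ω
      have m2 : h⁻¹ ω ∈ S₂ := hmem12 ω h1ω
      have m1 : h⁻¹ ω ∉ S₁ := Set.disjoint_right.mp hS₁S₂ m2
      rw [e1]
      show (if h⁻¹ ω ∈ S₁ then h⁻¹ (h⁻¹ ω) else if h⁻¹ ω ∈ S₂ then h (h⁻¹ ω) else h⁻¹ ω) = ω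
      rw [if_neg m1, if_pos m2, Equiv.Perm.apply_inv_self]
    · by_cases h2ω : ω ∈ S₂
      · have e1 : f ω = h ω := by rw [hf]; simp only [if_neg h1ω, if_pos h2ω]
        have m1 : h ω ∈ S₁ := hmem21 ω h2ω
        rw [e1]
        show (if h ω ∈ S₁ then h⁻¹ (h ω) else if h ω ∈ S₂ then h (h ω) else h ω) = ω
        rw [if_pos m1, Equiv.Perm.inv_apply_self]
      · have e1 : f ω = ω := by rw [hf]; simp only [if_neg h1ω, if_neg h2ω]
        rw [e1, e1]
  set g : Equiv.Perm ℕ := ⟨f, f, hinvol, hinvol⟩ with hg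
  have hginv : g⁻¹ = g := Equiv.ext fun ω => rfl
  have hgapp : ∀ ω, g ω = f ω := fun ω => rfl
  have hg1 : ∀ ω ∈ S₁, g ω = h⁻¹ ω := fun ω hω => if_pos hω
  have hg2 : ∀ ω, ω ∉ S₁ → ω ∈ S₂ → g ω = h ω := by
    intro ω h1ω h2ω
    show (if ω ∈ S₁ then h⁻¹ ω else if ω ∈ S₂ then h ω else ω) = h ω
    rw [if_neg h1ω, if_pos h2ω]
  have hg3 : ∀ ω, ω ∉ S₁ → ω ∉ S₂ → g ω = ω := by
    intro ω h1ω h2ω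
    show (if ω ∈ S₁ then h⁻¹ ω else if ω ∈ S₂ then h ω else ω) = ω
    rw [if_neg h1ω, if_neg h2ω]
  have hpsuppg : psupp g ⊆ S₁ ∪ S₂ := by
    intro ω hω
    by_contra hc
    rw [Set.mem_union] at hc
    push_neg at hc
    exact hω (hg3 ω hc.1 hc.2)
  -- conjugation by g on W₁ and W₂
  have hgW₁ : conjSet g W₁ = W₂ := by
    have key : ∀ x ∈ W₁, conjR g x = conjR h x := by
      intro x hx
      have hpx : psupp x ⊆ S₁ := psupp_subset_ssupp hx
      have hstx : StSet x S₁ := stset_of_psupp_subset hpx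
      have hcx : conjR h x ∈ W₂ := by
        rw [← hW2eq]
        exact Set.mem_image_of_mem _ hx
      have hpcx : psupp (conjR h x) ⊆ S₂ := psupp_subset_ssupp hcx
      ext ω
      rw [conjR_apply, hginv]
      by_cases h1ω : ω ∈ S₁
      · have e1 : g ω = h⁻¹ ω := hg1 ω h1ω
        have m2 : h⁻¹ ω ∈ S₂ := hmem12 ω h1ω
        have m1 : h⁻¹ ω ∉ S₁ := Set.disjoint_right.mp hS₁S₂ m2
        have e2 : x (h⁻¹ ω) = h⁻¹ ω := apply_eq_of_not_mem_psupp (fun hm => m1 (hpx hm))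
        have e3 : g (h⁻¹ ω) = h (h⁻¹ ω) := hg2 _ m1 m2
        rw [e1, e2, e3, Equiv.Perm.apply_inv_self,
          apply_eq_of_not_mem_psupp (fun hm => Set.disjoint_left.mp hS₁S₂ h1ω (hpcx hm))]
      · by_cases h2ω : ω ∈ S₂
        · have e1 : g ω = h ω := hg2 ω h1ω h2ω
          have m1 : h ω ∈ S₁ := hmem21 ω h2ω
          have m1x : x (h ω) ∈ S₁ := (hstx (h ω)).mp m1
          have e2 : g (x (h ω)) = h⁻¹ (x (h ω)) := hg1 _ m1x
          rw [e1, e2, conjR_apply]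
        · have e1 : g ω = ω := hg3 ω h1ω h2ω
          have e2 : x ω = ω := apply_eq_of_not_mem_psupp (fun hm => h1ω (hpx hm))
          rw [e1, e2, e1,
            apply_eq_of_not_mem_psupp (fun hm => h2ω (hpcx hm))]
    calc conjSet g W₁ = conjSet h W₁ := Set.image_congr key
    _ = W₂ := hW2eq
  have hW1inv : conjSet h⁻¹ W₂ = W₁ := by
    rw [← hW2eq, conjSet_conjSet, mul_inv_cancel, conjSet_one]
  have hgW₂ : conjSet g W₂ = W₁ := by
    have key : ∀ y ∈ W₂, conjR g y = conjR h⁻¹ y := by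
      intro y hy
      have hpy : psupp y ⊆ S₂ := psupp_subset_ssupp hy
      have hsty : StSet y S₂ := stset_of_psupp_subset hpy
      have hcy : conjR h⁻¹ y ∈ W₁ := by
        rw [← hW1inv]
        exact Set.mem_image_of_mem _ hy
      have hpcy : psupp (conjR h⁻¹ y) ⊆ S₁ := psupp_subset_ssupp hcy
      ext ω
      rw [conjR_apply, hginv]
      by_cases h1ω : ω ∈ S₁
      · have e1 : g ω = h⁻¹ ω := hg1 ω h1ω
        have m2 : h⁻¹ ω ∈ S₂ := hmem12 ω h1ω
        have m2y : y (h⁻¹ ω) ∈ S₂ := (hsty (h⁻¹ ω)).mp m2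
        have m1y : y (h⁻¹ ω) ∉ S₁ := Set.disjoint_right.mp hS₁S₂ m2y
        have e2 : g (y (h⁻¹ ω)) = h (y (h⁻¹ ω)) := hg2 _ m1y m2y
        rw [e1, e2, conjR_apply, inv_inv]
      · by_cases h2ω : ω ∈ S₂
        · have e1 : g ω = h ω := hg2 ω h1ω h2ω
          have m1 : h ω ∈ S₁ := hmem21 ω h2ω
          have e2 : y (h ω) = h ω := apply_eq_of_not_mem_psupp
            (fun hm => Set.disjoint_left.mp hS₁S₂ m1 (hpy hm))
          have e3 : g (h ω) = h⁻¹ (h ω) := hg1 _ m1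
          rw [e1, e2, e3, Equiv.Perm.inv_apply_self,
            apply_eq_of_not_mem_psupp (fun hm => h1ω (hpcy hm))]
        · have e1 : g ω = ω := hg3 ω h1ω h2ω
          have e2 : y ω = ω := apply_eq_of_not_mem_psupp (fun hm => h2ω (hpy hm))
          rw [e1, e2, e1,
            apply_eq_of_not_mem_psupp (fun hm => h1ω (hpcy hm))]
    calc conjSet g W₂ = conjSet h⁻¹ W₂ := Set.image_congr key
    _ = W₁ := hW1inv
  -- the rest of each decomposition is fixed by g
  have hRsetup : ∀ (L : List (Set (Equiv.Perm ℕ))) (W : Set (Equiv.Perm ℕ)), W ∈ L →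
      (∀ U ∈ L, IsIrred U) →
      L.Pairwise (fun A B => Disjoint (ssupp A) (ssupp B)) →
      L.prod = W * (L.erase W).prod ∧
        Disjoint (ssupp W) (ssupp ((L.erase W).prod)) ∧
        ssupp ((L.erase W).prod) ⊆ ssupp L.prod := by
    intro L W hWmem hirr hpw
    have hperm : List.Perm L (W :: L.erase W) := List.perm_cons_erase hWmem
    have hcomm : L.Pairwise Commute := by
      apply hpw.imp_of_mem
      intro U V _ _ hUV
      exact (commute_iff_eq _ _).mpr (set_commute hUV)
    have hprodeq : L.prod = (W :: L.erase W).prod := hperm.prod_eq' hcomm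
    have hpw' : (W :: L.erase W).Pairwise (fun A B => Disjoint (ssupp A) (ssupp B)) := by
      rwa [← List.Perm.pairwise_iff (fun {_ _} h => h.symm) hperm]
    have hne : ∀ U ∈ L, U.Nonempty := fun U hU => ((hirr U hU).1).2.1
    have hnee : ∀ U ∈ L.erase W, U.Nonempty := fun U hU => hne U (List.mem_of_mem_erase hU)
    refine ⟨by rw [hprodeq, List.prod_cons], ?_, ?_⟩
    · rw [ssupp_list_prod hnee hpw'.of_cons]
      apply disjoint_foldr
      intro T hT
      rcases List.mem_map.mp hT with ⟨U, hU, rfl⟩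
      exact (List.pairwise_cons.mp hpw').1 U hU
    · rw [ssupp_list_prod hnee hpw'.of_cons]
      intro ω hω
      rcases mem_foldr_union.mp hω with ⟨T, hT, hωT⟩
      rcases List.mem_map.mp hT with ⟨U, hU, rfl⟩
      exact ssupp_mem_subset_prod (List.mem_of_mem_erase hU) hne hpw hωT
  obtain ⟨hXe, hdX, hsubX⟩ := hRsetup LX W₁ hW₁mem hLXirr hLXpw
  obtain ⟨hYe, hdY, hsubY⟩ := hRsetup LY W₂ hW₂mem hLYirr hLYpw
  set R₁ := (LX.erase W₁).prod with hR₁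
  set R₂ := (LY.erase W₂).prod with hR₂
  rw [← hXprod] at hXe hsubX
  rw [← hYprod] at hYe hsubY
  have hgR₁ : conjSet g R₁ = R₁ := by
    apply conjSet_eq_self_of_disjoint
    apply Set.disjoint_of_subset hpsuppg subset_rfl
    rw [Set.disjoint_union_left]  -- might not exist; handle below
    constructor
    · exact hdX
    · exact Set.disjoint_of_subset hS₂B hsubX hdisj.symm
  have hgR₂ : conjSet g R₂ = R₂ := by
    apply conjSet_eq_self_of_disjoint
    apply Set.disjoint_of_subset hpsuppg subset_rfl
    rw [Set.disjoint_union_left]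
    constructor
    · exact Set.disjoint_of_subset hS₁A hsubY hdisj
    · exact hdY
  -- conjugation by g fixes X * Y
  have hcX : conjSet g X = W₂ * R₁ := by rw [hXe, conjSet_mul, hgW₁, hgR₁]
  have hcY : conjSet g Y = W₁ * R₂ := by rw [hYe, conjSet_mul, hgW₂, hgR₂]
  have hd21 : Disjoint (ssupp W₂) (ssupp R₁) := Set.disjoint_of_subset hS₂B hsubX hdisj.symm
  have hdW : Disjoint (ssupp W₂) (ssupp W₁) := hS₁S₂.symm
  have hdRW : Disjoint (ssupp R₁) (ssupp W₁) := hdX.symm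
  have hrearr : (W₂ * R₁) * (W₁ * R₂) = (W₁ * R₁) * (W₂ * R₂) := by
    calc (W₂ * R₁) * (W₁ * R₂) = W₂ * (R₁ * (W₁ * R₂)) := by rw [mul_assoc]
    _ = W₂ * ((R₁ * W₁) * R₂) := by rw [mul_assoc]
    _ = W₂ * ((W₁ * R₁) * R₂) := by rw [set_commute hdRW]
    _ = (W₂ * (W₁ * R₁)) * R₂ := by rw [← mul_assoc]
    _ = ((W₂ * W₁) * R₁) * R₂ := by rw [← mul_assoc]
    _ = ((W₁ * W₂) * R₁) * R₂ := by rw [set_commute hdW]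
    _ = (W₁ * (W₂ * R₁)) * R₂ := by rw [mul_assoc W₁ W₂ R₁]
    _ = (W₁ * (R₁ * W₂)) * R₂ := by rw [set_commute hd21]
    _ = ((W₁ * R₁) * W₂) * R₂ := by rw [← mul_assoc]
    _ = (W₁ * R₁) * (W₂ * R₂) := by rw [mul_assoc]
  have hgXY : conjSet g (X * Y) = X * Y := by
    rw [conjSet_mul, hcX, hcY, hrearr, ← hXe, ← hYe]
  -- g belongs to the normalizer of X * Y
  have hsuppXY : ssupp (X * Y) = ssupp X ∪ ssupp Y := ssupp_mul hdisj hX.2.1 hY.2.1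
  have hgNX : g ∈ NX (X * Y) := by
    apply mem_NX_iff.mpr
    refine ⟨?_, hgXY⟩
    intro ω hω
    rw [hsuppXY] at hω
    exact hg3 ω (fun hc => hω (Or.inl (hS₁A hc))) (fun hc => hω (Or.inr (hS₂B hc)))
  -- but g does not preserve ssupp X
  have hjoin : g ∈ NX X ⊔ NX Y := hco ▸ hgNX
  have hpres : StSet g (ssupp X) :=
    (sup_le NX_le_presSub_self (NX_le_presSub_other hdisj) : NX X ⊔ NX Y ≤ presSub (ssupp X))
      hjoin
  obtain ⟨ω₀, hω₀⟩ := memF_ssupp_nonempty hW₁F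
  have hω₀A : ω₀ ∈ ssupp X := hS₁A hω₀
  have hgω₀ : g ω₀ ∈ S₂ := by
    rw [hg1 ω₀ hω₀]
    exact hmem12 ω₀ hω₀
  have : g ω₀ ∈ ssupp X := (hpres ω₀).mp hω₀A
  exact Set.disjoint_left.mp hdisj this (hS₂B hgω₀)

/-! ### The reverse direction: no common irreducible factor implies coprime -/

lemma no_common_implies_coprime {X Y : Set (Equiv.Perm ℕ)} (hX : memF X) (hY : memF Y)
    (hdisj : Disjoint (ssupp X) (ssupp Y))
    (hn : ¬ ∃ (Z : Set (Equiv.Perm ℕ)) (LX LY : List (Set (Equiv.Perm ℕ))),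
        IsIrred Z ∧
        (∀ W ∈ LX, IsIrred W) ∧
        LX.Pairwise (fun A B => Disjoint (ssupp A) (ssupp B)) ∧ X = LX.prod ∧
        (∀ W ∈ LY, IsIrred W) ∧
        LY.Pairwise (fun A B => Disjoint (ssupp A) (ssupp B)) ∧ Y = LY.prod ∧
        (∃ W ∈ LX, EquivSet Z W) ∧ (∃ W ∈ LY, EquivSet Z W)) :
    CoprimeSets X Y := by
  classical
  set W : Set (Equiv.Perm ℕ) := X * Y with hWdef
  have hWF : memF W := memF_mul hX hY hdisj
  have hsupp : ssupp W = ssupp X ∪ ssupp Y := ssupp_mul hdisj hX.2.1 hY.2.1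
  have hfinW : (ssupp W).Finite := memF_ssupp_finite hWF
  have hfinX : (ssupp X).Finite := memF_ssupp_finite hX
  have hfinY : (ssupp Y).Finite := memF_ssupp_finite hY
  have hAblk : IsBlk W (ssupp X) := isBlk_mul_left hX hY hdisj
  have hBblk : IsBlk W (ssupp Y) := by
    have h1 := isBlk_mul_left hY hX hdisj.symm
    rwa [set_commute hdisj.symm] at h1
  have hresA : rstSet W (ssupp X) = X := rstSet_mul_left hX hY hdisj
  have hresB : rstSet W (ssupp Y) = Y := by
    have h1 := rstSet_mul_left hY hX hdisj.symm
    rwa [set_commute hdisj.symm] at h1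
  apply le_antisymm ?hmain (join_le_NX_mul hX hY hdisj)
  intro g hg
  obtain ⟨hg1, hgconj⟩ := mem_NX_iff.mp hg
  have hgsupp : StSet g (ssupp W) := symOn_stset hg1
  -- every minimal block of W lies in the support of X or of Y
  have hsplit : ∀ T, MinBlk W T → T ⊆ ssupp X ∨ T ⊆ ssupp Y := by
    intro T hT
    by_cases hTA : (T ∩ ssupp X).Nonempty
    · exact Or.inl (minBlk_subset_of_inter hT hAblk hTA)
    · right
      intro ω hω
      have hωs : ω ∈ ssupp W := hT.1.subset hω
      rw [hsupp] at hωs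
      rcases hωs with h | h
      · exact absurd ⟨hω, h⟩ (fun hc => hTA ⟨ω, hc⟩)
      · exact h
  -- g preserves the sides of the minimal blocks
  have hside : ∀ S, MinBlk W S →
      (S ⊆ ssupp X ∧ ⇑g ⁻¹' S ⊆ ssupp X) ∨ (S ⊆ ssupp Y ∧ ⇑g ⁻¹' S ⊆ ssupp Y) := by
    intro S hS
    have hS' : MinBlk W (⇑g ⁻¹' S) := minBlk_preimage hg hS
    rcases hsplit S hS with hSA | hSB
    · rcases hsplit _ hS' with h2 | h2
      · exact Or.inl ⟨hSA, h2⟩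
      · exfalso
        apply hn
        have hSX : MinBlk X S := by
          have := minBlk_to_rstSet hAblk hSA hS
          rwa [hresA] at this
        have hSY' : MinBlk Y (⇑g ⁻¹' S) := by
          have := minBlk_to_rstSet hBblk h2 hS'
          rwa [hresB] at this
        have hXSeq : rstSet X S = rstSet W S := by
          rw [← hresA]
          exact rstSet_rstSet hAblk hSA (fun x hx => hS.1.st hx)
        have hYSeq : rstSet Y (⇑g ⁻¹' S) = rstSet W (⇑g ⁻¹' S) := by
          rw [← hresB]
          exact rstSet_rstSet hBblk h2 (fun x hx => hS'.1.st hx)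
        have hchain : conjSet g (rstSet X S) = rstSet Y (⇑g ⁻¹' S) := by
          calc conjSet g (rstSet X S) = conjSet g (rstSet W S) := by rw [hXSeq]
          _ = rstSet (conjSet g W) (⇑g ⁻¹' S) := conjSet_rstSet g (fun x hx => hS.1.st hx)
          _ = rstSet W (⇑g ⁻¹' S) := by rw [hgconj]
          _ = rstSet Y (⇑g ⁻¹' S) := hYSeq.symm
        refine ⟨rstSet X S, decompList X hfinX, decompList Y hfinY,
          decompList_irred hX hfinX _ (decompList_mem hfinX hSX),
          decompList_irred hX hfinX, decompList_pairwise hfinX, decompList_prod hX hfinX,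
          decompList_irred hY hfinY, decompList_pairwise hfinY, decompList_prod hY hfinY,
          ⟨rstSet X S, decompList_mem hfinX hSX, 1, conjSet_one _⟩,
          ⟨rstSet Y (⇑g ⁻¹' S), decompList_mem hfinY hSY', g, hchain⟩⟩
    · rcases hsplit _ hS' with h2 | h2
      · exfalso
        apply hn
        have hSY : MinBlk Y S := by
          have := minBlk_to_rstSet hBblk hSB hS
          rwa [hresB] at this
        have hSX' : MinBlk X (⇑g ⁻¹' S) := by
          have := minBlk_to_rstSet hAblk h2 hS'
          rwa [hresA] at this
        have hYSeq : rstSet Y S = rstSet W S := by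
          rw [← hresB]
          exact rstSet_rstSet hBblk hSB (fun x hx => hS.1.st hx)
        have hXSeq : rstSet X (⇑g ⁻¹' S) = rstSet W (⇑g ⁻¹' S) := by
          rw [← hresA]
          exact rstSet_rstSet hAblk h2 (fun x hx => hS'.1.st hx)
        have hchain : conjSet g (rstSet Y S) = rstSet X (⇑g ⁻¹' S) := by
          calc conjSet g (rstSet Y S) = conjSet g (rstSet W S) := by rw [hYSeq]
          _ = rstSet (conjSet g W) (⇑g ⁻¹' S) := conjSet_rstSet g (fun x hx => hS.1.st hx)
          _ = rstSet W (⇑g ⁻¹' S) := by rw [hgconj]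
          _ = rstSet X (⇑g ⁻¹' S) := hXSeq.symm
        refine ⟨rstSet Y S, decompList X hfinX, decompList Y hfinY,
          decompList_irred hY hfinY _ (decompList_mem hfinY hSY),
          decompList_irred hX hfinX, decompList_pairwise hfinX, decompList_prod hX hfinX,
          decompList_irred hY hfinY, decompList_pairwise hfinY, decompList_prod hY hfinY,
          ⟨rstSet X (⇑g ⁻¹' S), decompList_mem hfinX hSX', g, hchain⟩,
          ⟨rstSet Y S, decompList_mem hfinY hSY, 1, conjSet_one _⟩⟩
      · exact Or.inr ⟨hSB, h2⟩
  -- hence g stabilizes ssupp X and ssupp Y setwise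
  have hstA : StSet g (ssupp X) := by
    intro ω
    constructor
    · intro hωA
      have hωs : ω ∈ ssupp W := hsupp ▸ Set.mem_union_left _ hωA
      have hgs : g ω ∈ ssupp W := (hgsupp ω).mp hωs
      obtain ⟨S, hS, hgωS⟩ := exists_minBlk hfinW hgs
      have hωpre : ω ∈ ⇑g ⁻¹' S := hgωS
      rcases hside S hS with ⟨h1, _⟩ | ⟨_, h2⟩
      · exact h1 hgωS
      · exact absurd (h2 hωpre) (fun hB => Set.disjoint_left.mp hdisj hωA hB)
    · intro hgωA
      have hgs : g ω ∈ ssupp W := hsupp ▸ Set.mem_union_left _ hgωA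
      have hωs : ω ∈ ssupp W := (hgsupp ω).mpr hgs
      rw [hsupp] at hωs
      rcases hωs with h | h
      · exact h
      · exfalso
        obtain ⟨S, hS, hgωS⟩ := exists_minBlk hfinW hgs
        have hωpre : ω ∈ ⇑g ⁻¹' S := hgωS
        rcases hside S hS with ⟨h1, h2⟩ | ⟨h1, h2⟩
        · exact Set.disjoint_left.mp hdisj (h2 hωpre) h
        · exact Set.disjoint_left.mp hdisj hgωA (h1 hgωS)
  have hstB : StSet g (ssupp Y) := by
    intro ω
    constructor
    · intro hωB
      have hωs : ω ∈ ssupp W := hsupp ▸ Set.mem_union_right _ hωB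
      have hgs : g ω ∈ ssupp W := (hgsupp ω).mp hωs
      rw [hsupp] at hgs
      rcases hgs with h | h
      · exact absurd ((hstA ω).mpr h) (fun hc => Set.disjoint_left.mp hdisj hc hωB)
      · exact h
    · intro hgωB
      have hgs : g ω ∈ ssupp W := hsupp ▸ Set.mem_union_right _ hgωB
      have hωs : ω ∈ ssupp W := (hgsupp ω).mpr hgs
      rw [hsupp] at hωs
      rcases hωs with h | h
      · exact absurd ((hstA ω).mp h) (fun hc => Set.disjoint_left.mp hdisj hc hgωB)
      · exact h
  have hA' : ⇑g ⁻¹' (ssupp X) = ssupp X := by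
    ext ω
    rw [Set.mem_preimage]
    exact (hstA ω).symm
  have hB' : ⇑g ⁻¹' (ssupp Y) = ssupp Y := by
    ext ω
    rw [Set.mem_preimage]
    exact (hstB ω).symm
  -- the two restrictions of g
  have hgAmem : rst g (ssupp X) ∈ NX X := by
    apply mem_NX_iff.mpr
    constructor
    · intro ω hω
      exact rst_apply_not_mem hω
    · have hcgX : conjSet g X = X := by
        rw [← hresA, conjSet_rstSet g (fun x hx => hAblk.st hx), hgconj, hA']
      have hkey : ∀ x ∈ X, conjR (rst g (ssupp X)) x = conjR g x := by
        intro x hx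
        have hpx : psupp x ⊆ ssupp X := psupp_subset_ssupp hx
        have hstx : StSet x (ssupp X) := stset_of_psupp_subset hpx
        ext ω
        rw [conjR_apply, conjR_apply, rst_inv hstA]
        by_cases hω : ω ∈ ssupp X
        · rw [rst_apply_mem hstA hω]
          have hgω : g ω ∈ ssupp X := (hstA ω).mp hω
          have hxgω : x (g ω) ∈ ssupp X := (hstx _).mp hgω
          rw [rst_apply_mem hstA.inv hxgω]
        · have e1 : rst g (ssupp X) ω = ω := rst_apply_not_mem hω
          have e2 : x ω = ω := apply_eq_of_not_mem_psupp (fun hm => hω (hpx hm))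
          have hgω : g ω ∉ ssupp X := fun hc => hω ((hstA ω).mpr hc)
          have e3 : x (g ω) = g ω := apply_eq_of_not_mem_psupp (fun hm => hgω (hpx hm))
          rw [e1, e2, rst_apply_not_mem hω, e3, Equiv.Perm.inv_apply_self]
      calc conjSet (rst g (ssupp X)) X = conjSet g X := Set.image_congr hkey
      _ = X := hcgX
  have hgBmem : rst g (ssupp Y) ∈ NX Y := by
    apply mem_NX_iff.mpr
    constructor
    · intro ω hω
      exact rst_apply_not_mem hω
    · have hcgY : conjSet g Y = Y := by
        rw [← hresB, conjSet_rstSet g (fun x hx => hBblk.st hx), hgconj, hB']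
      have hkey : ∀ y ∈ Y, conjR (rst g (ssupp Y)) y = conjR g y := by
        intro y hy
        have hpy : psupp y ⊆ ssupp Y := psupp_subset_ssupp hy
        have hsty : StSet y (ssupp Y) := stset_of_psupp_subset hpy
        ext ω
        rw [conjR_apply, conjR_apply, rst_inv hstB]
        by_cases hω : ω ∈ ssupp Y
        · rw [rst_apply_mem hstB hω]
          have hgω : g ω ∈ ssupp Y := (hstB ω).mp hω
          have hygω : y (g ω) ∈ ssupp Y := (hsty _).mp hgω
          rw [rst_apply_mem hstB.inv hygω]
        · have e1 : rst g (ssupp Y) ω = ω := rst_apply_not_mem hω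
          have e2 : y ω = ω := apply_eq_of_not_mem_psupp (fun hm => hω (hpy hm))
          have hgω : g ω ∉ ssupp Y := fun hc => hω ((hstB ω).mpr hc)
          have e3 : y (g ω) = g ω := apply_eq_of_not_mem_psupp (fun hm => hgω (hpy hm))
          rw [e1, e2, rst_apply_not_mem hω, e3, Equiv.Perm.inv_apply_self]
      calc conjSet (rst g (ssupp Y)) Y = conjSet g Y := Set.image_congr hkey
      _ = Y := hcgY
  -- and g is their product
  have hgdecomp : g = rst g (ssupp X) * rst g (ssupp Y) := by
    ext ω
    rw [Equiv.Perm.mul_apply]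
    by_cases hωA : ω ∈ ssupp X
    · have e1 : rst g (ssupp Y) ω = ω :=
        rst_apply_not_mem (Set.disjoint_left.mp hdisj hωA)
      rw [e1, rst_apply_mem hstA hωA]
    · by_cases hωB : ω ∈ ssupp Y
      · have e1 : rst g (ssupp Y) ω = g ω := rst_apply_mem hstB hωB
        have e2 : g ω ∈ ssupp Y := (hstB ω).mp hωB
        rw [e1, rst_apply_not_mem (Set.disjoint_right.mp hdisj e2)]
      · have e1 : rst g (ssupp Y) ω = ω := rst_apply_not_mem hωB
        have e2 : rst g (ssupp X) ω = ω := rst_apply_not_mem hωA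
        rw [e1, e2]
        have : ω ∉ ssupp W := by
          rw [hsupp]
          exact fun hc => hc.elim hωA hωB
        exact hg1 ω this
  rw [hgdecomp]
  exact mul_mem (Subgroup.mem_sup_left hgAmem) (Subgroup.mem_sup_right hgBmem)

/-- `X, Y ∈ 𝓢^q` with disjoint supports are coprime if and only if they have no
irreducible factor in common: there is no irreducible `Z ∈ 𝓕` equivalent both to a
factor in a decomposition of `X` into irreducibles and to a factor in a decomposition
of `Y` into irreducibles. -/
theorem stmt_10 (q : ℕ) (hq : 2 ≤ q) (X Y : Set (Equiv.Perm ℕ))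
    (hX : memS q X) (hY : memS q Y) (hdisj : Disjoint (ssupp X) (ssupp Y)) :
    CoprimeSets X Y ↔
      ¬ ∃ (Z : Set (Equiv.Perm ℕ)) (LX LY : List (Set (Equiv.Perm ℕ))),
        IsIrred Z ∧
        (∀ W ∈ LX, IsIrred W) ∧
        LX.Pairwise (fun A B => Disjoint (ssupp A) (ssupp B)) ∧ X = LX.prod ∧
        (∀ W ∈ LY, IsIrred W) ∧
        LY.Pairwise (fun A B => Disjoint (ssupp A) (ssupp B)) ∧ Y = LY.prod ∧
        (∃ W ∈ LX, EquivSet Z W) ∧ (∃ W ∈ LY, EquivSet Z W) := by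

  constructor
  · exact coprime_implies_no_common hX.1 hY.1 hdisj
  · exact no_common_implies_coprime hX.1 hY.1 hdisj

end FPS
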